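/- arXiv:2311.06277 — 7 statements merged into one kernel-verified Lean document; each statement's English description precedes it below -/
import Mathlib

section
/- Let ω ∈ 𝓑'₀ have power series expansion ω(z) = c₁z + c₂z² + c₃z³ + ⋯ on 𝔻. Then |c₃| ≤ (1/3)·(1 − |c₁|² − 4|c₂|²/(1 + |c₁|)). -/
open Complex Metric

/-- Max-modulus division lemma: if `G` is analytic on the unit ball and `|z * G z| ≤ M`,
then `|G z| ≤ M` on the ball. -/
lemma schur_divL {G : ℂ → ℂ} (hG : DifferentiableOn ℂ G (ball 0 1)) {M : ℝ}
    (h : ∀ z ∈ ball (0:ℂ) 1, ‖z * G z‖ ≤ M) :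
    ∀ z ∈ ball (0:ℂ) 1, ‖G z‖ ≤ M := by
  intro z hz
  have hz1 : ‖z‖ < 1 := by simpa [mem_ball, dist_eq] using hz
  have key : ∀ r : ℝ, ‖z‖ < r → r < 1 → ‖G z‖ * r ≤ M := by
    intro r hr1 hr2
    have hr0 : 0 < r := lt_of_le_of_lt (norm_nonneg z) hr1
    have hsub : closedBall (0:ℂ) r ⊆ ball 0 1 := closedBall_subset_ball hr2
    have hcl : closure (ball (0:ℂ) r) = closedBall 0 r := closure_ball 0 hr0.ne'
    have hdc : DiffContOnCl ℂ G (ball 0 r) := by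
      refine ⟨hG.mono (ball_subset_ball hr2.le), ?_⟩
      rw [hcl]
      exact hG.continuousOn.mono hsub
    have hfr : ∀ w ∈ frontier (ball (0:ℂ) r), ‖G w‖ ≤ M / r := by
      rw [frontier_ball 0 hr0.ne']
      intro w hw
      have hwabs : ‖w‖ = r := by simpa [mem_sphere_iff_norm] using hw
      have hwb : w ∈ ball (0:ℂ) 1 := by
        simp [mem_ball, dist_eq, hwabs, hr2]
      have h1 := h w hwb
      rw [norm_mul, hwabs] at h1
      rw [le_div_iff₀ hr0]
      calc ‖G w‖ * r = r * ‖G w‖ := by rw [mul_comm]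
        _ ≤ M := h1
    have hzc : z ∈ closure (ball (0:ℂ) r) := by
      rw [hcl]
      simp [mem_closedBall, dist_eq, hr1.le]
    have h2 := Complex.norm_le_of_forall_mem_frontier_norm_le isBounded_ball hdc hfr hzc
    rw [le_div_iff₀ hr0] at h2
    exact h2
  have htend : Filter.Tendsto (fun r : ℝ => ‖G z‖ * r) (nhdsWithin 1 (Set.Iio 1))
      (nhds (‖G z‖)) := by
    have hcont : Continuous (fun r : ℝ => ‖G z‖ * r) :=
      continuous_const.mul continuous_id
    have := (hcont.tendsto 1).mono_left (nhdsWithin_le_nhds (s := Set.Iio 1))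
    simpa using this
  refine le_of_tendsto htend ?_
  have h1 : ∀ᶠ r in nhdsWithin (1:ℝ) (Set.Iio 1), ‖z‖ < r :=
    eventually_nhdsWithin_of_eventually_nhds (eventually_gt_nhds hz1)
  have h2 : ∀ᶠ r in nhdsWithin (1:ℝ) (Set.Iio 1), r < 1 :=
    eventually_mem_nhdsWithin
  filter_upwards [h1, h2] with r hr1 hr2
  exact key r hr1 hr2

/-- Maximum modulus principle: if `|f|` attains the max at `0`, `f` is constant on the ball. -/
lemma schur_const {f : ℂ → ℂ} (hf : DifferentiableOn ℂ f (ball 0 1))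
    (h : ∀ z ∈ ball (0:ℂ) 1, ‖f z‖ ≤ ‖f 0‖) :
    Set.EqOn f (fun _ => f 0) (ball 0 1) := by
  have hm : IsMaxOn (norm ∘ f) (ball (0:ℂ) 1) 0 := fun z hz => h z hz
  exact Complex.eqOn_of_isPreconnected_of_isMaxOn_norm (convex_ball (0:ℂ) 1).isPreconnected
    isOpen_ball hf (mem_ball_self one_pos) hm

lemma schur_normSq (a p : ℂ) :
    Complex.normSq (1 - (starRingEnd ℂ) a * p) - Complex.normSq (p - a)
      = (1 - Complex.normSq a) * (1 - Complex.normSq p) := by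
  simp only [Complex.normSq_apply, Complex.sub_re, Complex.sub_im, Complex.mul_re,
    Complex.mul_im, Complex.one_re, Complex.one_im, Complex.conj_re, Complex.conj_im]
  ring

lemma schur_mobius_bound {a p : ℂ} (ha : ‖a‖ ≤ 1) (hp : ‖p‖ ≤ 1) :
    ‖p - a‖ ≤ ‖1 - (starRingEnd ℂ) a * p‖ := by
  have h1 : Complex.normSq a ≤ 1 := by
    rw [← Complex.sq_norm]; nlinarith [norm_nonneg a]
  have h2 : Complex.normSq p ≤ 1 := by
    rw [← Complex.sq_norm]; nlinarith [norm_nonneg p]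
  have h3 := schur_normSq a p
  have h4 : Complex.normSq (p - a) ≤ Complex.normSq (1 - (starRingEnd ℂ) a * p) := by nlinarith
  rw [Complex.norm_def, Complex.norm_def]
  exact Real.sqrt_le_sqrt h4

lemma schur_dslope_diffOn {f : ℂ → ℂ} (hf : DifferentiableOn ℂ f (ball 0 1)) :
    DifferentiableOn ℂ (dslope f 0) (ball 0 1) := by
  intro x hx
  rcases eq_or_ne x 0 with rfl | hx0
  · have h1 : AnalyticAt ℂ f 0 := (hf.analyticOnNhd isOpen_ball) 0 (mem_ball_self one_pos)
    obtain ⟨p, hp⟩ := h1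
    exact (hp.has_fpower_series_dslope_fslope.analyticAt).differentiableAt.differentiableWithinAt
  · exact ((differentiableAt_dslope_of_ne hx0).mpr
      (hf.differentiableAt (isOpen_ball.mem_nhds hx))).differentiableWithinAt

/-- The auxiliary Schur-algorithm function. -/
noncomputable def schurG (f : ℂ → ℂ) : ℂ → ℂ :=
  fun z => dslope f 0 z * (1 - (starRingEnd ℂ) (f 0) * f z)⁻¹

lemma schur_denom_ne {f : ℂ → ℂ} (hb : ∀ z ∈ ball (0:ℂ) 1, ‖f z‖ ≤ 1)
    (hlt : ‖f 0‖ < 1) :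
    ∀ z ∈ ball (0:ℂ) 1, (1 - (starRingEnd ℂ) (f 0) * f z) ≠ 0 := by
  intro z hz heq
  have h1 : (starRingEnd ℂ) (f 0) * f z = 1 := by
    have := sub_eq_zero.mp heq; exact this.symm
  have h2 : ‖(starRingEnd ℂ) (f 0) * f z‖ = 1 := by rw [h1]; simp
  rw [norm_mul, Complex.norm_conj] at h2
  nlinarith [hb z hz, norm_nonneg (f 0), norm_nonneg (f z)]

lemma schurG_diffOn {f : ℂ → ℂ} (hf : DifferentiableOn ℂ f (ball 0 1))
    (hb : ∀ z ∈ ball (0:ℂ) 1, ‖f z‖ ≤ 1)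
    (hlt : ‖f 0‖ < 1) :
    DifferentiableOn ℂ (schurG f) (ball 0 1) :=
  (schur_dslope_diffOn hf).mul
    (((differentiableOn_const _).sub ((differentiableOn_const _).mul hf)).inv
      (schur_denom_ne hb hlt))

lemma schurG_bound {f : ℂ → ℂ} (hf : DifferentiableOn ℂ f (ball 0 1))
    (hb : ∀ z ∈ ball (0:ℂ) 1, ‖f z‖ ≤ 1)
    (hlt : ‖f 0‖ < 1) :
    ∀ z ∈ ball (0:ℂ) 1, ‖schurG f z‖ ≤ 1 := by
  refine schur_divL (schurG_diffOn hf hb hlt) ?_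
  intro z hz
  have hzd : z * dslope f 0 z = f z - f 0 := by
    have := sub_smul_dslope f 0 z
    simpa [smul_eq_mul] using this
  have hne := schur_denom_ne hb hlt z hz
  have : z * schurG f z = (f z - f 0) * (1 - (starRingEnd ℂ) (f 0) * f z)⁻¹ := by
    rw [schurG, ← mul_assoc, hzd]
  rw [this, norm_mul, norm_inv]
  have hd : 0 < ‖1 - (starRingEnd ℂ) (f 0) * f z‖ :=
    norm_pos_iff.mpr hne
  rw [mul_inv_le_iff₀ hd, one_mul]
  exact schur_mobius_bound hlt.le (hb z hz)

/-- Schwarz–Pick at the origin: first Schur coefficient inequality. -/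
lemma schur_S1 {f : ℂ → ℂ} (hf : DifferentiableOn ℂ f (ball 0 1))
    (hb : ∀ z ∈ ball (0:ℂ) 1, ‖f z‖ ≤ 1) :
    ‖deriv f 0‖ ≤ 1 - ‖f 0‖ ^ 2 := by
  have h01 : (0:ℂ) ∈ ball (0:ℂ) 1 := mem_ball_self one_pos
  by_cases hlt : ‖f 0‖ < 1
  · have hGb := schurG_bound hf hb hlt 0 h01
    have hSr : (1 - (starRingEnd ℂ) (f 0) * f 0) = ((1 - Complex.normSq (f 0) : ℝ) : ℂ) := by
      rw [mul_comm, Complex.mul_conj]; push_cast; ring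
    have hsr : (0:ℝ) < 1 - Complex.normSq (f 0) := by
      rw [← Complex.sq_norm]; nlinarith [norm_nonneg (f 0)]
    have hG0 : ‖schurG f 0‖
        = ‖deriv f 0‖ * (1 - Complex.normSq (f 0))⁻¹ := by
      rw [schurG, dslope_same, norm_mul, norm_inv, hSr, Complex.norm_of_nonneg hsr.le]
    rw [hG0] at hGb
    rw [Complex.sq_norm]
    calc ‖deriv f 0‖
        = ‖deriv f 0‖ * (1 - Complex.normSq (f 0))⁻¹ * (1 - Complex.normSq (f 0)) := by
          field_simp
      _ ≤ 1 * (1 - Complex.normSq (f 0)) := by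
          apply mul_le_mul_of_nonneg_right hGb hsr.le
      _ = 1 - Complex.normSq (f 0) := one_mul _
  · have ha1 : ‖f 0‖ = 1 :=
      le_antisymm (hb 0 h01) (not_lt.mp hlt)
    have hconst := schur_const hf (fun z hz => (hb z hz).trans_eq ha1.symm)
    have hde : deriv f 0 = 0 := by
      have hev : f =ᶠ[nhds 0] (fun _ => f 0) :=
        Filter.eventuallyEq_of_mem (isOpen_ball.mem_nhds h01) hconst
      rw [hev.deriv_eq]
      exact deriv_const 0 (f 0)
    rw [hde, ha1]
    simp

/-- Second Schur coefficient inequality. -/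
lemma schur_S2 {f : ℂ → ℂ} (hf : DifferentiableOn ℂ f (ball 0 1))
    (hb : ∀ z ∈ ball (0:ℂ) 1, ‖f z‖ ≤ 1) :
    ‖deriv (dslope f 0) 0‖ ≤
      1 - ‖f 0‖ ^ 2 - ‖deriv f 0‖ ^ 2 / (1 + ‖f 0‖) := by
  have h01 : (0:ℂ) ∈ ball (0:ℂ) 1 := mem_ball_self one_pos
  by_cases hlt : ‖f 0‖ < 1
  · -- main case
    set a : ℂ := f 0 with ha
    set b : ℂ := deriv f 0 with hbdef
    set d : ℂ := deriv (dslope f 0) 0 with hddef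
    set S : ℂ := 1 - (starRingEnd ℂ) a * a with hSdef
    have hSr : S = ((1 - Complex.normSq a : ℝ) : ℂ) := by
      rw [hSdef, mul_comm, Complex.mul_conj]; push_cast; ring
    have hsr : (0:ℝ) < 1 - Complex.normSq a := by
      rw [← Complex.sq_norm]; nlinarith [norm_nonneg a]
    have hS0 : S ≠ 0 := by
      rw [hSr]
      exact_mod_cast hsr.ne'
    -- derivative of G at 0
    have hfd : HasDerivAt f b 0 :=
      (hf.differentiableAt (isOpen_ball.mem_nhds h01)).hasDerivAt
    have hf1 : HasDerivAt (dslope f 0) d 0 :=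
      ((schur_dslope_diffOn hf).differentiableAt (isOpen_ball.mem_nhds h01)).hasDerivAt
    have hDd : HasDerivAt (fun z => 1 - (starRingEnd ℂ) a * f z) (-((starRingEnd ℂ) a * b)) 0 :=
      (hfd.const_mul ((starRingEnd ℂ) a)).const_sub 1
    have hD0 : (1 - (starRingEnd ℂ) a * f 0) ≠ 0 := by
      rw [← ha]; exact hS0
    have hinv := hDd.inv hD0
    have hGd : HasDerivAt (schurG f)
        (d * (1 - (starRingEnd ℂ) a * f 0)⁻¹ +
          dslope f 0 0 * (-(-((starRingEnd ℂ) a * b)) / (1 - (starRingEnd ℂ) a * f 0) ^ 2)) 0 :=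
      hf1.mul hinv
    have hGderiv : deriv (schurG f) 0 = (d * S + (starRingEnd ℂ) a * b ^ 2) / S ^ 2 := by
      rw [hGd.deriv, dslope_same, ← hbdef, ← ha]
      rw [← hSdef]
      field_simp
    have hG0 : schurG f 0 = b * S⁻¹ := by
      rw [schurG, dslope_same, ← hbdef, ← ha, ← hSdef]
    -- apply S1 to G
    have hS1 := schur_S1 (schurG_diffOn hf hb hlt) (schurG_bound hf hb hlt)
    rw [hGderiv, hG0] at hS1
    set A : ℝ := ‖a‖ with hA
    set B : ℝ := ‖b‖ with hB
    set D : ℝ := ‖d‖ with hD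
    have hsrA : 1 - Complex.normSq a = 1 - A ^ 2 := by rw [← Complex.sq_norm]
    have habsS : ‖S‖ = 1 - A ^ 2 := by
      rw [hSr, Complex.norm_of_nonneg hsr.le, hsrA]
    have hA1 : A < 1 := hlt
    have hA0 : 0 ≤ A := norm_nonneg a
    have hsA : (0:ℝ) < 1 - A ^ 2 := by rw [← hsrA]; exact hsr
    -- turn hS1 into |dS + a̅b²| ≤ (1-A²)² - B²
    have h1 : ‖(d * S + (starRingEnd ℂ) a * b ^ 2) / S ^ 2‖
        = ‖d * S + (starRingEnd ℂ) a * b ^ 2‖ / (1 - A ^ 2) ^ 2 := by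
      rw [norm_div, norm_pow, habsS]
    have h2 : ‖b * S⁻¹‖ = B / (1 - A ^ 2) := by
      rw [norm_mul, norm_inv, habsS, div_eq_mul_inv]
    rw [h1, h2] at hS1
    have hkey : ‖d * S + (starRingEnd ℂ) a * b ^ 2‖ ≤ (1 - A ^ 2) ^ 2 - B ^ 2 := by
      have hBsq : (B / (1 - A ^ 2)) ^ 2 * (1 - A ^ 2) ^ 2 = B ^ 2 := by
        field_simp
      have := mul_le_mul_of_nonneg_right hS1 (le_of_lt (by positivity : (0:ℝ) < (1 - A ^ 2) ^ 2))
      rw [div_mul_cancel₀] at this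
      · nlinarith [this, hBsq]
      · positivity
    -- |d| (1-A²) ≤ |dS + a̅b²| + A B²
    have htri : D * (1 - A ^ 2) ≤ ‖d * S + (starRingEnd ℂ) a * b ^ 2‖ + A * B ^ 2 := by
      have h3' := norm_add_le (d * S + (starRingEnd ℂ) a * b ^ 2)
        (-((starRingEnd ℂ) a * b ^ 2))
      rw [add_neg_cancel_right] at h3'
      have h3 : ‖d * S‖ ≤
          ‖d * S + (starRingEnd ℂ) a * b ^ 2‖
            + ‖-((starRingEnd ℂ) a * b ^ 2)‖ := h3'
      have h4 : ‖d * S‖ = D * (1 - A ^ 2) := by rw [norm_mul, habsS]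
      have h5 : ‖-((starRingEnd ℂ) a * b ^ 2)‖ = A * B ^ 2 := by
        rw [norm_neg, norm_mul, norm_pow, Complex.norm_conj]
      rw [h4, h5] at h3
      exact h3
    have hmain : D * (1 - A ^ 2) ≤ (1 - A ^ 2) ^ 2 - B ^ 2 + A * B ^ 2 := by linarith
    -- conclude
    have h1A : (0:ℝ) < 1 + A := by linarith
    have h1mA : (0:ℝ) < 1 - A := by nlinarith
    have hkey2 : D * (1 + A) ≤ (1 - A ^ 2) * (1 + A) - B ^ 2 := by nlinarith
    have hfin : D + B ^ 2 / (1 + A) ≤ 1 - A ^ 2 := by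
      have hdm : B ^ 2 / (1 + A) * (1 + A) = B ^ 2 := div_mul_cancel₀ _ h1A.ne'
      nlinarith
    linarith
  · -- constant case
    have ha1 : ‖f 0‖ = 1 := le_antisymm (hb 0 h01) (not_lt.mp hlt)
    have hconst := schur_const hf (fun z hz => (hb z hz).trans_eq ha1.symm)
    have hde : deriv f 0 = 0 := by
      have hev : f =ᶠ[nhds 0] (fun _ => f 0) :=
        Filter.eventuallyEq_of_mem (isOpen_ball.mem_nhds h01) hconst
      rw [hev.deriv_eq]
      exact deriv_const 0 (f 0)
    have hds0 : Set.EqOn (dslope f 0) (fun _ => (0:ℂ)) (ball 0 1) := by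
      intro z hz
      rcases eq_or_ne z 0 with rfl | hz0
      · rw [dslope_same]; exact hde
      · rw [dslope_of_ne f hz0, slope_def_field, hconst hz]
        simp [div_eq_mul_inv]
    have hd2 : deriv (dslope f 0) 0 = 0 := by
      have hev : dslope f 0 =ᶠ[nhds 0] (fun _ => (0:ℂ)) :=
        Filter.eventuallyEq_of_mem (isOpen_ball.mem_nhds h01) hds0
      rw [hev.deriv_eq]
      exact deriv_const 0 0
    rw [hd2, hde, ha1]
    simp

theorem stmt_3 (ω : ℂ → ℂ) (c : ℕ → ℂ)
    (hd : DifferentiableOn ℂ ω (ball 0 1))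
    (h0 : ω 0 = 0)
    (hb : ∀ z ∈ ball (0:ℂ) 1, ‖deriv ω z‖ ≤ 1)
    (hc : ∀ z ∈ ball (0:ℂ) 1, HasSum (fun n : ℕ => c (n + 1) * z ^ (n + 1)) (ω z)) :
    ‖c 3‖ ≤ (1/3) * (1 - ‖c 1‖^2 - 4 * ‖c 2‖^2 / (1 + ‖c 1‖)) := by
  have h01 : (0:ℂ) ∈ ball (0:ℂ) 1 := mem_ball_self one_pos
  -- the power series of ω
  set c' : ℕ → ℂ := fun n => if n = 0 then 0 else c n with hc'def
  set p : FormalMultilinearSeries ℂ ℂ ℂ := FormalMultilinearSeries.ofScalars ℂ c' with hpdef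
  have hpcoeff : ∀ n, p.coeff n = c' n := by
    intro n
    simp [hpdef, FormalMultilinearSeries.coeff, FormalMultilinearSeries.ofScalars,
      Pi.one_def, List.ofFn_const]
  have hp : HasFPowerSeriesAt ω p 0 := by
    rw [hasFPowerSeriesAt_iff]
    filter_upwards [isOpen_ball.mem_nhds h01] with z hz
    have h1 := hc z hz
    have h1' : HasSum (fun n : ℕ => (fun m : ℕ => c' m * z ^ m) (n + 1)) (ω z) := by
      refine h1.congr_fun fun n => ?_
      simp [hc'def]
    have h2 := (hasSum_nat_add_iff (f := fun m : ℕ => c' m * z ^ m) 1).mp h1'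
    simp only [Finset.range_one, Finset.sum_singleton] at h2
    have h3 : c' 0 * z ^ 0 = 0 := by simp [hc'def]
    rw [h3, add_zero] at h2
    rw [zero_add]
    refine h2.congr_fun fun n => ?_
    rw [hpcoeff n]
    simp [mul_comm]
  -- the function f = deriv ω and its power series
  set f : ℂ → ℂ := deriv ω with hfdef
  have hωan : AnalyticOnNhd ℂ ω (ball 0 1) := hd.analyticOnNhd isOpen_ball
  have hfan : AnalyticOnNhd ℂ f (ball 0 1) := hωan.deriv
  have hfd : DifferentiableOn ℂ f (ball 0 1) := hfan.differentiableOn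
  obtain ⟨q, hq⟩ := hfan 0 h01
  -- coefficient relations
  have hqk : ∀ k : ℕ, (Nat.factorial k : ℂ) * q.coeff k = (Nat.factorial (k + 1) : ℂ) * p.coeff (k + 1) := by
    intro k
    obtain ⟨r, hr⟩ := hq
    obtain ⟨r', hr'⟩ := hp
    have h1 := hr.factorial_smul (1:ℂ) k
    have h2 := hr'.factorial_smul (1:ℂ) (k + 1)
    have h3 : iteratedDeriv k f 0 = iteratedFDeriv ℂ k f 0 (fun _ => 1) :=
      iteratedDeriv_eq_iteratedFDeriv
    have h4 : iteratedDeriv (k + 1) ω 0 = iteratedFDeriv ℂ (k + 1) ω 0 (fun _ => 1) :=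
      iteratedDeriv_eq_iteratedFDeriv
    have h5 : iteratedDeriv (k + 1) ω = iteratedDeriv k f := iteratedDeriv_succ'
    have h6 : (Nat.factorial k : ℂ) * q.coeff k = iteratedDeriv k f 0 := by
      rw [h3, ← h1]
      have he : (q k fun _ => (1:ℂ)) = q.coeff k := rfl
      rw [he, nsmul_eq_mul]
    have h7 : (Nat.factorial (k + 1) : ℂ) * p.coeff (k + 1) = iteratedDeriv (k + 1) ω 0 := by
      rw [h4, ← h2]
      have he : (p (k + 1) fun _ => (1:ℂ)) = p.coeff (k + 1) := rfl
      rw [he, nsmul_eq_mul]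
    rw [h6, h7, h5]
  -- identify the three coefficients
  have hf0 : f 0 = c 1 := by
    have := hp.deriv
    rw [hfdef]
    rw [this]
    have : (p 1 fun _ => 1) = p.coeff 1 := rfl
    rw [this, hpcoeff]
    simp [hc'def]
  have hder : deriv f 0 = 2 * c 2 := by
    have h1 := hq.deriv
    have h2 : (q 1 fun _ => 1) = q.coeff 1 := rfl
    rw [h1, h2]
    have h3 := hqk 1
    rw [hpcoeff] at h3
    have h4 : (1:ℂ) * q.coeff 1 = 2 * c 2 := by
      simpa [hc'def, Nat.factorial] using h3
    linear_combination h4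
  have hdd : deriv (dslope f 0) 0 = 3 * c 3 := by
    have h1 := hq.has_fpower_series_dslope_fslope.deriv
    have h2 : (q.fslope 1 fun _ => 1) = q.fslope.coeff 1 := rfl
    rw [h1, h2, FormalMultilinearSeries.coeff_fslope]
    have h3 := hqk 2
    rw [hpcoeff] at h3
    have h4 : (2:ℂ) * q.coeff 2 = 6 * c 3 := by
      simpa [hc'def, Nat.factorial] using h3
    linear_combination h4 / 2
  -- apply S2
  have hS2 := schur_S2 hfd hb
  rw [hf0, hder, hdd] at hS2
  have e1 : ‖3 * c 3‖ = 3 * ‖c 3‖ := by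
    rw [norm_mul]; norm_num
  have e2 : ‖2 * c 2‖ ^ 2 = 4 * ‖c 2‖ ^ 2 := by
    rw [norm_mul]; norm_num; ring
  rw [e1, e2] at hS2
  linarith
end

section
/- Let ω ∈ 𝓑'₀ have power series expansion ω(z) = c₁z + c₂z² + c₃z³ + ⋯ on 𝔻, and suppose 0 ≤ |c₁| ≤ 4/7. Then |c₃ − c₁c₂| ≤ (1/48)·(1 + |c₁|)·(9|c₁|² − 16|c₁| + 16). -/
open Complex Metric

lemma normSq_mobius (a w : ℂ) :
    Complex.normSq (1 - (starRingEnd ℂ) a * w) - Complex.normSq (w - a)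
      = (1 - Complex.normSq a) * (1 - Complex.normSq w) := by
  simp only [Complex.normSq_apply, Complex.sub_re, Complex.sub_im, Complex.mul_re, Complex.mul_im,
    Complex.one_re, Complex.one_im, Complex.conj_re, Complex.conj_im]
  ring

lemma one_sub_ne_zero_of_abs_lt {x : ℂ} (h : ‖x‖ < 1) : (1 : ℂ) - x ≠ 0 := by
  intro h0
  have : x = 1 := by linear_combination -h0
  simp [this] at h

lemma mobius_lt_one {a w : ℂ} (ha : ‖a‖ < 1) (hw : ‖w‖ < 1) :
    ‖(w - a) / (1 - (starRingEnd ℂ) a * w)‖ < 1 := by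
  have hden : (1 : ℂ) - (starRingEnd ℂ) a * w ≠ 0 := by
    apply one_sub_ne_zero_of_abs_lt
    rw [norm_mul, Complex.norm_conj]
    calc ‖a‖ * ‖w‖ ≤ ‖a‖ * 1 := by
          exact mul_le_mul_of_nonneg_left hw.le (norm_nonneg a)
      _ < 1 := by simpa using ha
  rw [norm_div, div_lt_one (norm_pos_iff.mpr hden)]
  have h1 : Complex.normSq a < 1 := by
    have := Complex.sq_norm a ▸ (by nlinarith [norm_nonneg a] : ‖a‖ ^ 2 < 1)
    linarith [this]
  have h2 : Complex.normSq w < 1 := by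
    have : ‖w‖ ^ 2 < 1 := by nlinarith [norm_nonneg w]
    rw [Complex.sq_norm] at this; exact this
  have key := normSq_mobius a w
  have : Complex.normSq (w - a) < Complex.normSq (1 - (starRingEnd ℂ) a * w) := by nlinarith
  have := Real.sqrt_lt_sqrt (Complex.normSq_nonneg _) this
  simpa [Complex.norm_def] using this
lemma schur_deriv_le (f : ℂ → ℂ) (hd : DifferentiableOn ℂ f (ball 0 1))
    (hb : ∀ z ∈ ball (0:ℂ) 1, ‖f z‖ ≤ 1) :
    ‖deriv f 0‖ ≤ 1 - ‖f 0‖ ^ 2 := by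
  have h0mem : (0:ℂ) ∈ ball (0:ℂ) 1 := mem_ball_self one_pos
  by_cases hs : ∀ z ∈ ball (0:ℂ) 1, ‖f z‖ < 1
  · set w := f 0 with hw_def
    have hw : ‖w‖ < 1 := hs 0 h0mem
    set g : ℂ → ℂ := fun z => (f z - w) / (1 - (starRingEnd ℂ) w * f z) with hg_def
    have hden : ∀ z ∈ ball (0:ℂ) 1, (1 : ℂ) - (starRingEnd ℂ) w * f z ≠ 0 := by
      intro z hz
      apply one_sub_ne_zero_of_abs_lt
      rw [norm_mul, Complex.norm_conj]
      calc ‖w‖ * ‖f z‖ ≤ ‖w‖ * 1 :=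
            mul_le_mul_of_nonneg_left (hb z hz) (norm_nonneg w)
        _ < 1 := by simpa using hw
    have hgd : DifferentiableOn ℂ g (ball 0 1) := by
      apply DifferentiableOn.div
      · exact hd.sub (differentiableOn_const w)
      · exact (differentiableOn_const 1).sub ((differentiableOn_const _).mul hd)
      · exact hden
    have hg0 : g 0 = 0 := by simp [hg_def, hw_def]
    have hmaps : Set.MapsTo g (ball 0 1) (ball (g 0) 1) := by
      intro z hz
      rw [hg0, mem_ball_zero_iff]
      exact mobius_lt_one hw (hs z hz)
    have key : ‖deriv g 0‖ ≤ 1 / 1 := Complex.norm_deriv_le_div_of_mapsTo_ball hgd (hmaps.mono_right ball_subset_closedBall) one_pos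
    have hfd : DifferentiableAt ℂ f 0 := hd.differentiableAt (isOpen_ball.mem_nhds h0mem)
    have hD : (1 : ℂ) - (starRingEnd ℂ) w * w ≠ 0 := by
      have := hden 0 h0mem; rwa [← hw_def] at this
    have hder : HasDerivAt g ((deriv f 0 * (1 - (starRingEnd ℂ) w * f 0) -
        (f 0 - w) * (0 - (starRingEnd ℂ) w * deriv f 0)) / (1 - (starRingEnd ℂ) w * f 0) ^ 2) 0 := by
      exact ((hfd.hasDerivAt.sub_const w).div
        ((hasDerivAt_const 0 (1:ℂ)).sub ((hfd.hasDerivAt.const_mul _))) (by rw [← hw_def]; exact hD))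
    have hgval : deriv g 0 = deriv f 0 / (1 - (starRingEnd ℂ) w * w) := by
      rw [hder.deriv, ← hw_def]
      field_simp
      ring
    have habsD : ‖1 - (starRingEnd ℂ) w * w‖ = 1 - ‖w‖ ^ 2 := by
      have : (starRingEnd ℂ) w * w = (Complex.normSq w : ℂ) := by
        rw [mul_comm, Complex.mul_conj]
      rw [this, ← Complex.ofReal_one, ← Complex.ofReal_sub, Complex.norm_real, Real.norm_eq_abs,
        _root_.abs_of_nonneg (by nlinarith [Complex.sq_norm w, norm_nonneg w]), ← Complex.sq_norm]
    rw [hgval, norm_div, habsD] at key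
    have hpos : (0:ℝ) < 1 - ‖w‖ ^ 2 := by nlinarith [norm_nonneg w]
    norm_num at key
    rw [div_le_one hpos] at key
    simpa using key
  · push_neg at hs
    obtain ⟨z₀, hz₀, h1le⟩ := hs
    have habs : ‖f z₀‖ = 1 := le_antisymm (hb z₀ hz₀) h1le
    have hmax : IsMaxOn (norm ∘ f) (ball (0:ℂ) 1) z₀ := by
      intro z hz
      simp only [Function.comp_apply, Set.mem_setOf_eq, habs]
      exact hb z hz
    have heq := Complex.eqOn_of_isPreconnected_of_isMaxOn_norm
      (convex_ball (0:ℂ) 1).isPreconnected isOpen_ball hd hz₀ hmax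
    have hev : f =ᶠ[nhds (0:ℂ)] fun _ => f z₀ :=
      Filter.eventuallyEq_of_mem (isOpen_ball.mem_nhds h0mem) heq
    have hder0 : deriv f 0 = 0 := by rw [hev.deriv_eq]; simp
    have hf0 : ‖f 0‖ ≤ 1 := hb 0 h0mem
    rw [hder0]
    simp only [norm_zero]
    nlinarith [norm_nonneg (f 0)]

lemma final_ineq (b t : ℝ) (hb0 : 0 ≤ b) (hb1 : b < 1) (ht0 : 0 ≤ t) (ht : t ≤ 1 - b^2) :
    (1-b^2)/3 * (1 - t^2/(1-b^2)^2) + b*t^2/(3*(1-b^2)) + b*t/2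
      ≤ 1/48*(1+b)*(9*b^2-16*b+16) := by
  have hd : (0:ℝ) < 1 - b^2 := by nlinarith
  rw [← sub_nonneg]
  have key : 1/48*(1+b)*(9*b^2-16*b+16) -
      ((1-b^2)/3 * (1 - t^2/(1-b^2)^2) + b*t^2/(3*(1-b^2)) + b*t/2)
      = (1-b)*(3*b*(1+b) - 4*t)^2 / (48 * (1-b^2)) := by
    field_simp
    ring
  rw [key]
  apply div_nonneg
  · have : 0 ≤ 1 - b := by linarith
    positivity
  · positivity

theorem series_facts (ω : ℂ → ℂ) (c : ℕ → ℂ)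
    (hc : ∀ z ∈ ball (0:ℂ) 1, HasSum (fun n : ℕ => c (n + 1) * z ^ (n + 1)) (ω z)) :
    deriv ω 0 = c 1 ∧ deriv (deriv ω) 0 = 2 * c 2 ∧ deriv (dslope (deriv ω) 0) 0 = 3 * c 3 := by
  classical
  set a : ℕ → ℂ := fun n => if n = 0 then 0 else c n with ha_def
  set p := FormalMultilinearSeries.ofScalars ℂ a with hp_def
  have hsum_full : ∀ z ∈ ball (0:ℂ) 1, HasSum (fun n => a n * z ^ n) (ω z) := by
    intro z hz
    have h : HasSum (fun n => a (n + 1) * z ^ (n + 1)) (ω z) := by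
      refine (hc z hz).congr_fun fun n => ?_
      simp [ha_def]
    have := (hasSum_nat_add_iff (f := fun n => a n * z ^ n) 1).mp h
    simpa [ha_def] using this
  have hrad : 1 ≤ p.radius := by
    apply ENNReal.le_of_forall_nnreal_lt
    intro r hr
    have hrlt : (r:ℝ) < 1 := by exact_mod_cast hr
    have hmem : ((r:ℝ):ℂ) ∈ ball (0:ℂ) 1 := by
      simp [mem_ball_zero_iff, Complex.norm_real, Real.norm_eq_abs, _root_.abs_of_nonneg r.2, hrlt]
    have hsum := (hsum_full _ hmem).summable
    apply p.le_radius_of_tendsto (l := 0)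
    have htend := hsum.tendsto_atTop_zero
    have : Filter.Tendsto (fun n => ‖a n * ((r:ℝ):ℂ) ^ n‖) Filter.atTop (nhds 0) := by
      simpa using htend.norm
    refine this.congr fun n => ?_
    rw [hp_def, FormalMultilinearSeries.ofScalars_norm, norm_mul, norm_pow]
    simp [Complex.norm_real, Real.norm_eq_abs, _root_.abs_of_nonneg r.2]
  have hps : HasFPowerSeriesOnBall ω p 0 1 := by
    refine ⟨hrad, one_pos, ?_⟩
    intro y hy
    have hy' : y ∈ ball (0:ℂ) 1 := by
      rw [mem_ball_zero_iff, ← coe_nnnorm, NNReal.coe_lt_one, ← ENNReal.coe_lt_one_iff, ← enorm_eq_nnnorm]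
      simpa using hy
    simp only [zero_add]
    refine (hsum_full y hy').congr_fun fun n => ?_
    rw [hp_def, FormalMultilinearSeries.ofScalars_apply_eq, smul_eq_mul]
  set L := ContinuousLinearMap.apply ℂ ℂ (1:ℂ) with hL_def
  set q := L.compFormalMultilinearSeries p.derivSeries with hq_def
  have hqball : HasFPowerSeriesOnBall (deriv ω) q 0 1 := by
    have h2 := L.comp_hasFPowerSeriesOnBall hps.fderiv
    have he : (fun z => L (fderiv ℂ ω z)) = deriv ω := by
      funext z
      simp [hL_def, ContinuousLinearMap.apply_apply, fderiv_apply_one_eq_deriv]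
    have he2 : ⇑L ∘ fderiv ℂ ω = deriv ω := he
    rwa [he2] at h2
  have hq : ∀ n, q.coeff n = ((n : ℂ) + 1) * c (n + 1) := by
    intro n
    have h1 : q.coeff n = (p.derivSeries n (fun _ => 1)) 1 := rfl
    rw [h1, p.derivSeries_apply_diag]
    have h2 : p (n+1) (fun _ => (1:ℂ)) = a (n+1) := by
      rw [hp_def, FormalMultilinearSeries.ofScalars_apply_eq]
      simp
    rw [h2]
    simp [ha_def, nsmul_eq_mul]
  have hqat : HasFPowerSeriesAt (deriv ω) q 0 := hqball.hasFPowerSeriesAt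
  refine ⟨?_, ?_, ?_⟩
  · have h := hqat.coeff_zero (fun _ => 1)
    rw [show q 0 (fun _ => (1:ℂ)) = q.coeff 0 from rfl, hq 0] at h
    simpa using h.symm
  · have h := hqat.deriv
    rw [show (q 1 fun _ => (1:ℂ)) = q.coeff 1 from rfl, hq 1] at h
    rw [h]; norm_num
  · have h := (hqat.has_fpower_series_dslope_fslope).deriv
    rw [show (q.fslope 1 fun _ => (1:ℂ)) = q.fslope.coeff 1 from rfl,
      FormalMultilinearSeries.coeff_fslope, hq 2] at h
    rw [h]; norm_num

theorem stmt_5 (ω : ℂ → ℂ) (c : ℕ → ℂ)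
    (hd : DifferentiableOn ℂ ω (ball 0 1))
    (h0 : ω 0 = 0)
    (hb : ∀ z ∈ ball (0:ℂ) 1, ‖deriv ω z‖ ≤ 1)
    (hc : ∀ z ∈ ball (0:ℂ) 1, HasSum (fun n : ℕ => c (n + 1) * z ^ (n + 1)) (ω z))
    (h1 : ‖c 1‖ ≤ 4/7) :
    ‖c 3 - c 1 * c 2‖ ≤ (1/48) * (1 + ‖c 1‖) * (9 * ‖c 1‖^2 - 16 * ‖c 1‖ + 16) := by
  obtain ⟨hf0, hf1, hf2⟩ := series_facts ω c hc
  set φ := deriv ω with hφ_def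
  have h0mem : (0:ℂ) ∈ ball (0:ℂ) 1 := mem_ball_self one_pos
  have hφd : DifferentiableOn ℂ φ (ball 0 1) :=
    ((hd.analyticOnNhd isOpen_ball).deriv).differentiableOn
  set b := ‖c 1‖ with hb_def
  have hb0 : 0 ≤ b := norm_nonneg _
  by_cases hs : ∀ z ∈ ball (0:ℂ) 1, ‖φ z‖ < 1
  · -- non-constant (strict) case
    have hbl1 : b < 1 := by
      have := hs 0 h0mem
      rwa [hf0] at this
    set a0 := c 1 with ha0_def
    set A1 := deriv φ 0 with hA1_def
    set A2 := deriv (dslope φ 0) 0 with hA2_def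
    set D := (1:ℂ) - (starRingEnd ℂ) a0 * a0 with hD_def
    have hDne : D ≠ 0 := by
      apply one_sub_ne_zero_of_abs_lt
      rw [norm_mul, Complex.norm_conj]
      nlinarith
    have hDabs : ‖D‖ = 1 - b ^ 2 := by
      have h1' : (starRingEnd ℂ) a0 * a0 = (Complex.normSq a0 : ℂ) := by
        rw [mul_comm, Complex.mul_conj]
      rw [hD_def, h1', ← Complex.ofReal_one, ← Complex.ofReal_sub, Complex.norm_real, Real.norm_eq_abs,
        _root_.abs_of_nonneg (by nlinarith [Complex.sq_norm a0] : (0:ℝ) ≤ 1 - Complex.normSq a0),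
        ← Complex.sq_norm]
    set ψ : ℂ → ℂ := fun z => (φ z - a0) / (1 - (starRingEnd ℂ) a0 * φ z) with hψ_def
    have hdenne : ∀ z ∈ ball (0:ℂ) 1, (1:ℂ) - (starRingEnd ℂ) a0 * φ z ≠ 0 := by
      intro z hz
      apply one_sub_ne_zero_of_abs_lt
      rw [norm_mul, Complex.norm_conj]
      nlinarith [hs z hz, norm_nonneg (φ z)]
    have hψd : DifferentiableOn ℂ ψ (ball 0 1) :=
      (hφd.sub (differentiableOn_const a0)).div
        ((differentiableOn_const 1).sub ((differentiableOn_const _).mul hφd)) hdenne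
    have hψ0 : ψ 0 = 0 := by
      simp [hψ_def, hf0]
    have hψmaps : Set.MapsTo ψ (ball 0 1) (ball (ψ 0) 1) := by
      intro z hz
      rw [hψ0, mem_ball_zero_iff]
      exact mobius_lt_one hbl1 (hs z hz)
    set χ := dslope ψ 0 with hχ_def
    have hχd : DifferentiableOn ℂ χ (ball 0 1) :=
      (differentiableOn_dslope (isOpen_ball.mem_nhds h0mem)).2 hψd
    have hχb : ∀ z ∈ ball (0:ℂ) 1, ‖χ z‖ ≤ 1 := by
      intro z hz
      have := Complex.norm_dslope_le_div_of_mapsTo_ball hψd (hψmaps.mono_right ball_subset_closedBall) hz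
      simpa using this
    have hφat : DifferentiableAt ℂ φ 0 := hφd.differentiableAt (isOpen_ball.mem_nhds h0mem)
    have hdenderiv : HasDerivAt (fun z => (1:ℂ) - (starRingEnd ℂ) a0 * φ z)
        (0 - (starRingEnd ℂ) a0 * A1) 0 :=
      (hasDerivAt_const 0 (1:ℂ)).sub (hφat.hasDerivAt.const_mul _)
    have hden0 : (1:ℂ) - (starRingEnd ℂ) a0 * φ 0 ≠ 0 := by rw [hf0]; exact hDne
    have hψder : HasDerivAt ψ ((A1 * (1 - (starRingEnd ℂ) a0 * φ 0) -
        (φ 0 - a0) * (0 - (starRingEnd ℂ) a0 * A1)) / (1 - (starRingEnd ℂ) a0 * φ 0) ^ 2) 0 :=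
      (hφat.hasDerivAt.sub_const a0).div hdenderiv hden0
    have hψ'0 : deriv ψ 0 = A1 / D := by
      rw [hψder.deriv, hf0]
      rw [← hD_def]
      field_simp
      ring
    set g := dslope φ 0 with hg_def
    have hg0 : g 0 = A1 := dslope_same φ 0
    have hgd : DifferentiableAt ℂ g 0 :=
      ((differentiableOn_dslope (isOpen_ball.mem_nhds h0mem)).2 hφd).differentiableAt
        (isOpen_ball.mem_nhds h0mem)
    set u : ℂ → ℂ := fun z => ((1:ℂ) - (starRingEnd ℂ) a0 * φ z)⁻¹ with hu_def
    have hu : HasDerivAt u (-(0 - (starRingEnd ℂ) a0 * A1) / (1 - (starRingEnd ℂ) a0 * φ 0) ^ 2) 0 :=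
      hdenderiv.inv hden0
    have hχeq : χ = fun z => g z * u z := by
      funext z
      rcases eq_or_ne z 0 with rfl | hne
      · show dslope ψ 0 0 = g 0 * u 0
        rw [dslope_same, hψ'0, hg0]
        simp only [hu_def, hf0, ← hD_def]
        rw [div_eq_mul_inv]
      · show dslope ψ 0 z = g z * u z
        rw [dslope_of_ne _ hne, hg_def, dslope_of_ne _ hne, slope_def_field, slope_def_field,
          hψ0, hf0]
        simp only [hψ_def, hu_def, sub_zero]
        ring
    have hχ'0 : deriv χ 0 = A2 * D⁻¹ + A1 * ((starRingEnd ℂ) a0 * A1 / D ^ 2) := by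
      rw [hχeq]
      have hprod : HasDerivAt (fun z => g z * u z) _ 0 := hgd.hasDerivAt.mul hu
      rw [hprod.deriv, hg0, ← hA2_def]
      simp only [hu_def, hf0, ← hD_def]
      ring
    have hχ0val : χ 0 = A1 / D := by
      rw [hχ_def, dslope_same, hψ'0]
    set t := ‖A1‖ with ht_def
    have ht0 : 0 ≤ t := norm_nonneg _
    have hd2 : (0:ℝ) < 1 - b ^ 2 := by nlinarith
    have htD : ‖A1 / D‖ = t / (1 - b ^ 2) := by rw [norm_div, hDabs]
    have hI : t ≤ 1 - b ^ 2 := by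
      have h := hχb 0 h0mem
      rw [hχ0val, htD, div_le_one hd2] at h
      exact h
    have hII := schur_deriv_le χ hχd hχb
    rw [hχ'0, hχ0val, htD] at hII
    have hkey : c 3 - c 1 * c 2 = D / 3 * (A2 * D⁻¹ + (starRingEnd ℂ) a0 * A1 ^ 2 / D ^ 2) -
        (starRingEnd ℂ) a0 * A1 ^ 2 / (3 * D) - a0 * A1 / 2 := by
      have hA1v : A1 = 2 * c 2 := hf1
      have hA2v : A2 = 3 * c 3 := hf2
      rw [hA1v, hA2v, ← ha0_def]
      clear_value D
      have hDD : D * D⁻¹ = 1 := mul_inv_cancel₀ hDne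
      field_simp [hDne]
      linear_combination (0:ℂ) * hDD
    have hrw : A1 * ((starRingEnd ℂ) a0 * A1 / D ^ 2) = (starRingEnd ℂ) a0 * A1 ^ 2 / D ^ 2 := by
      ring
    have habs3 : ‖c 3 - c 1 * c 2‖ ≤
        (1 - b ^ 2) / 3 * ‖A2 * D⁻¹ + (starRingEnd ℂ) a0 * A1 ^ 2 / D ^ 2‖ +
          b * t ^ 2 / (3 * (1 - b ^ 2)) + b * t / 2 := by
      rw [hkey]
      have tri : ∀ x y z : ℂ, ‖x - y - z‖ ≤
          ‖x‖ + ‖y‖ + ‖z‖ := by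
        intro x y z
        have t1 : ‖x - y - z‖ ≤ ‖x - y‖ + ‖z‖ := by
          simpa [sub_eq_add_neg] using norm_add_le (x - y) (-z)
        have t2 : ‖x - y‖ ≤ ‖x‖ + ‖y‖ := by
          simpa [sub_eq_add_neg] using norm_add_le x (-y)
        linarith
      refine le_trans (tri _ _ _) ?_
      have e1 : ‖D / 3 * (A2 * D⁻¹ + (starRingEnd ℂ) a0 * A1 ^ 2 / D ^ 2)‖ =
          (1 - b ^ 2) / 3 * ‖A2 * D⁻¹ + (starRingEnd ℂ) a0 * A1 ^ 2 / D ^ 2‖ := by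
        rw [norm_mul, norm_div, hDabs]
        norm_num
      have e2 : ‖(starRingEnd ℂ) a0 * A1 ^ 2 / (3 * D)‖ = b * t ^ 2 / (3 * (1 - b ^ 2)) := by
        rw [norm_div, norm_mul, norm_mul, norm_pow, Complex.norm_conj, hDabs, ← ht_def, ← hb_def]
        norm_num
      have e3 : ‖a0 * A1 / 2‖ = b * t / 2 := by
        rw [norm_div, norm_mul, ← ht_def, ← hb_def]
        norm_num
      rw [e1, e2, e3]
    rw [hrw] at hII
    have hmono : (1 - b ^ 2) / 3 * ‖A2 * D⁻¹ + (starRingEnd ℂ) a0 * A1 ^ 2 / D ^ 2‖ ≤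
        (1 - b ^ 2) / 3 * (1 - t ^ 2 / (1 - b ^ 2) ^ 2) := by
      apply mul_le_mul_of_nonneg_left _ (by positivity)
      calc ‖A2 * D⁻¹ + (starRingEnd ℂ) a0 * A1 ^ 2 / D ^ 2‖
          ≤ 1 - (t / (1 - b ^ 2)) ^ 2 := hII
        _ = 1 - t ^ 2 / (1 - b ^ 2) ^ 2 := by rw [div_pow]
    calc ‖c 3 - c 1 * c 2‖
        ≤ (1 - b ^ 2) / 3 * ‖A2 * D⁻¹ + (starRingEnd ℂ) a0 * A1 ^ 2 / D ^ 2‖ +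
            b * t ^ 2 / (3 * (1 - b ^ 2)) + b * t / 2 := habs3
      _ ≤ (1 - b ^ 2) / 3 * (1 - t ^ 2 / (1 - b ^ 2) ^ 2) +
            b * t ^ 2 / (3 * (1 - b ^ 2)) + b * t / 2 := by linarith
      _ ≤ 1 / 48 * (1 + b) * (9 * b ^ 2 - 16 * b + 16) := final_ineq b t hb0 hbl1 ht0 hI
  · -- constant case
    push_neg at hs
    obtain ⟨z₀, hz₀, h1le⟩ := hs
    have habs : ‖φ z₀‖ = 1 := le_antisymm (hb z₀ hz₀) h1le
    have heq := Complex.eqOn_of_isPreconnected_of_isMaxOn_norm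
      (convex_ball (0:ℂ) 1).isPreconnected isOpen_ball hφd hz₀ (fun z hz => by
        simp only [Function.comp_apply, Set.mem_setOf_eq, habs]
        exact hb z hz)
    have hder0 : deriv φ 0 = 0 := by
      have hev : φ =ᶠ[nhds (0:ℂ)] fun _ => φ z₀ :=
        Filter.eventuallyEq_of_mem (isOpen_ball.mem_nhds h0mem) heq
      rw [hev.deriv_eq]; simp
    have hc2 : c 2 = 0 := by
      have h2 : (2:ℂ) * c 2 = 0 := by rw [← hf1]; exact hder0
      exact (mul_eq_zero.mp h2).resolve_left (by norm_num)
    have hc3 : c 3 = 0 := by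
      have hev2 : dslope φ 0 =ᶠ[nhds (0:ℂ)] fun _ => 0 := by
        filter_upwards [isOpen_ball.mem_nhds h0mem] with z hz
        rcases eq_or_ne z 0 with rfl | hne
        · simp [dslope_same, hder0]
        · rw [dslope_of_ne _ hne, slope_def_field, heq hz, heq h0mem]
          simp
      have h3 : (3:ℂ) * c 3 = 0 := by
        rw [← hf2, hev2.deriv_eq]; simp
      exact (mul_eq_zero.mp h3).resolve_left (by norm_num)
    rw [hc2, hc3]
    simp only [mul_zero, sub_zero, norm_zero]
    nlinarith [hb0, h1]
end

section
/- Let ω ∈ 𝓑'₀ have power series expansion ω(z) = c₁z + c₂z² + c₃z³ + ⋯ on 𝔻, and suppose 4/7 ≤ |c₁| ≤ 1. Then |c₃ − c₁c₂| ≤ (5/6)·|c₁|·(1 − |c₁|²). -/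
open Complex Metric Set Filter Function Nat
open scoped NNReal ENNReal

private lemma normSq_key (a w : ℂ) : normSq (1 - (starRingEnd ℂ) a * w) - normSq (w - a)
    = (1 - normSq a) * (1 - normSq w) := by
  simp only [Complex.normSq_apply, Complex.sub_re, Complex.sub_im, Complex.mul_re, Complex.mul_im,
    Complex.one_re, Complex.one_im, Complex.conj_re, Complex.conj_im]
  ring

private lemma moebius_lt {a w : ℂ} (ha : ‖a‖ < 1) (hw : ‖w‖ < 1) :
    ‖w - a‖ < ‖1 - (starRingEnd ℂ) a * w‖ := by
  have h1 : normSq a < 1 := by rw [← Complex.sq_norm]; nlinarith [norm_nonneg a]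
  have h2 : normSq w < 1 := by rw [← Complex.sq_norm]; nlinarith [norm_nonneg w]
  have h3 := normSq_key a w
  have h4 : normSq (w - a) < normSq (1 - (starRingEnd ℂ) a * w) := by nlinarith
  rw [Complex.norm_def, Complex.norm_def]
  exact Real.sqrt_lt_sqrt (normSq_nonneg _) h4

private lemma const_of_abs_eq_one {f : ℂ → ℂ} (hd : DifferentiableOn ℂ f (ball 0 1))
    (hb : ∀ z ∈ ball (0:ℂ) 1, ‖f z‖ ≤ 1) {z₀ : ℂ} (hz₀ : z₀ ∈ ball (0:ℂ) 1)
    (h1 : ‖f z₀‖ = 1) : EqOn f (Function.const ℂ (f z₀)) (ball 0 1) := by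
  refine eqOn_of_isPreconnected_of_isMaxOn_norm (convex_ball (0:ℂ) 1).isPreconnected
    isOpen_ball hd hz₀ ?_
  intro z hz
  simp only [comp_apply, Set.mem_setOf_eq]
  rw [h1]; exact hb z hz

private lemma deriv_eqOn_const {f : ℂ → ℂ} {w : ℂ} (h : EqOn f (Function.const ℂ w) (ball 0 1))
    {z : ℂ} (hz : z ∈ ball (0:ℂ) 1) : deriv f z = 0 := by
  have he : f =ᶠ[nhds z] Function.const ℂ w := eventually_of_mem (isOpen_ball.mem_nhds hz) h
  rw [he.deriv_eq]
  exact deriv_const z w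

private lemma rho_eq (a : ℂ) : (1 : ℂ) - (starRingEnd ℂ) a * a = ((1 - ‖a‖ ^ 2 : ℝ) : ℂ) := by
  rw [mul_comm, Complex.mul_conj, Complex.sq_norm]
  push_cast
  ring

private lemma abs_rho {a : ℂ} (ha : ‖a‖ ≤ 1) :
    ‖(1 : ℂ) - (starRingEnd ℂ) a * a‖ = 1 - ‖a‖ ^ 2 := by
  rw [rho_eq, Complex.norm_real, Real.norm_eq_abs]
  exact abs_of_nonneg (by nlinarith [norm_nonneg a])
private lemma schur1 {f : ℂ → ℂ} (hd : DifferentiableOn ℂ f (ball 0 1))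
    (hb : ∀ z ∈ ball (0:ℂ) 1, ‖f z‖ ≤ 1) :
    ‖deriv f 0‖ ≤ 1 - ‖f 0‖ ^ 2 := by
  have h0 : (0:ℂ) ∈ ball (0:ℂ) 1 := mem_ball_self one_pos
  by_cases hs : ∀ z ∈ ball (0:ℂ) 1, ‖f z‖ < 1
  · set a := f 0 with ha
    have haa : ‖a‖ < 1 := hs 0 h0
    have hden : ∀ z ∈ ball (0:ℂ) 1, 1 - (starRingEnd ℂ) a * f z ≠ 0 := by
      intro z hz h
      have h2 := moebius_lt haa (hs z hz)
      rw [h, norm_zero] at h2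
      exact absurd h2 (norm_nonneg _).not_gt
    set v : ℂ → ℂ := fun z => (f z - a) / (1 - (starRingEnd ℂ) a * f z) with hv
    have hvd : DifferentiableOn ℂ v (ball 0 1) :=
      (hd.sub_const a).div
        ((differentiableOn_const 1).sub ((differentiableOn_const _).mul hd)) hden
    have hv0 : v 0 = 0 := by simp [hv, ha]
    have hmaps : MapsTo v (ball 0 1) (ball (v 0) 1) := by
      intro z hz
      rw [hv0, mem_ball_zero_iff, hv]
      simp only [norm_div]
      rw [div_lt_one ((norm_nonneg _).trans_lt (moebius_lt haa (hs z hz)))]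
      exact moebius_lt haa (hs z hz)
    have hfd : HasDerivAt f (deriv f 0) 0 :=
      (hd.differentiableAt (isOpen_ball.mem_nhds h0)).hasDerivAt
    have hne : (1 : ℂ) - (starRingEnd ℂ) a * a ≠ 0 := by
      have h4 := hden 0 h0
      rwa [← ha] at h4
    have hder : HasDerivAt v (deriv f 0 / (1 - (starRingEnd ℂ) a * a)) 0 := by
      have h1 : HasDerivAt (fun z => f z - a) (deriv f 0) 0 := hfd.sub_const a
      have h2 : HasDerivAt (fun z => 1 - (starRingEnd ℂ) a * f z)
          (-((starRingEnd ℂ) a * deriv f 0)) 0 := by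
        simpa using (hfd.const_mul ((starRingEnd ℂ) a)).const_sub 1
      have h3 := h1.div h2 (hden 0 h0)
      refine h3.congr_deriv ?_
      rw [← ha]
      field_simp
      ring
    have hval : deriv v 0 = deriv f 0 / (1 - (starRingEnd ℂ) a * a) := hder.deriv
    have hineq := Complex.norm_deriv_le_div_of_mapsTo_ball hvd (hmaps.mono_right ball_subset_closedBall) one_pos
    rw [hval, norm_div, abs_rho haa.le] at hineq
    norm_num at hineq
    have hρpos : 0 < 1 - ‖a‖ ^ 2 := by nlinarith [norm_nonneg a]
    rw [div_le_one hρpos] at hineq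
    exact hineq
  · push_neg at hs
    obtain ⟨z₀, hz₀, hge⟩ := hs
    have h1 : ‖f z₀‖ = 1 := le_antisymm (hb z₀ hz₀) hge
    have hcon := const_of_abs_eq_one hd hb hz₀ h1
    have hd0 : deriv f 0 = 0 := deriv_eqOn_const hcon h0
    have hf0 : ‖f 0‖ = 1 := by rw [hcon h0]; exact h1
    rw [hd0, hf0]
    simp
private lemma schur2 {f : ℂ → ℂ} (hd : DifferentiableOn ℂ f (ball 0 1))
    (hb : ∀ z ∈ ball (0:ℂ) 1, ‖f z‖ ≤ 1) :
    ‖deriv (deriv f) 0 * (1 - (starRingEnd ℂ) (f 0) * f 0)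
        + 2 * (starRingEnd ℂ) (f 0) * (deriv f 0) ^ 2‖
      ≤ 2 * ((1 - ‖f 0‖ ^ 2) ^ 2 - ‖deriv f 0‖ ^ 2) := by
  have h0 : (0:ℂ) ∈ ball (0:ℂ) 1 := mem_ball_self one_pos
  by_cases hs : ∀ z ∈ ball (0:ℂ) 1, ‖f z‖ < 1
  · set a := f 0 with ha
    have haa : ‖a‖ < 1 := hs 0 h0
    have hρpos : 0 < 1 - ‖a‖ ^ 2 := by nlinarith [norm_nonneg a]
    have hden : ∀ z ∈ ball (0:ℂ) 1, 1 - (starRingEnd ℂ) a * f z ≠ 0 := by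
      intro z hz h
      have h2 := moebius_lt haa (hs z hz)
      rw [h, norm_zero] at h2
      exact absurd h2 (norm_nonneg _).not_gt
    have hne : (1 : ℂ) - (starRingEnd ℂ) a * a ≠ 0 := by
      have h4 := hden 0 h0
      rwa [← ha] at h4
    set g : ℂ → ℂ := fun z => (f z - a) / (1 - (starRingEnd ℂ) a * f z) with hg
    have hgd : DifferentiableOn ℂ g (ball 0 1) :=
      (hd.sub_const a).div
        ((differentiableOn_const 1).sub ((differentiableOn_const _).mul hd)) hden
    have hg0 : g 0 = 0 := by simp [hg, ha]
    have hmaps : MapsTo g (ball 0 1) (ball (g 0) 1) := by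
      intro z hz
      rw [hg0, mem_ball_zero_iff, hg]
      simp only [norm_div]
      rw [div_lt_one ((norm_nonneg _).trans_lt (moebius_lt haa (hs z hz)))]
      exact moebius_lt haa (hs z hz)
    -- derivative formula for g on the ball
    set F : ℂ → ℂ := fun z => deriv f z * (1 - (starRingEnd ℂ) a * a) /
      (1 - (starRingEnd ℂ) a * f z) ^ 2 with hF
    have hgderiv : ∀ z ∈ ball (0:ℂ) 1, HasDerivAt g (F z) z := by
      intro z hz
      have hfz : HasDerivAt f (deriv f z) z :=
        (hd.differentiableAt (isOpen_ball.mem_nhds hz)).hasDerivAt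
      have h1 : HasDerivAt (fun w => f w - a) (deriv f z) z := hfz.sub_const a
      have h2 : HasDerivAt (fun w => 1 - (starRingEnd ℂ) a * f w)
          (-((starRingEnd ℂ) a * deriv f z)) z := by
        simpa using (hfz.const_mul ((starRingEnd ℂ) a)).const_sub 1
      have h3 := h1.div h2 (hden z hz)
      refine h3.congr_deriv ?_
      rw [hF]
      field_simp
      ring
    have hEq : EqOn (deriv g) F (ball 0 1) := fun z hz => (hgderiv z hz).deriv
    have hgd0 : deriv g 0 = deriv f 0 / (1 - (starRingEnd ℂ) a * a) := by
      rw [hEq h0]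
      show deriv f 0 * (1 - (starRingEnd ℂ) a * a) / (1 - (starRingEnd ℂ) a * f 0) ^ 2 = _
      rw [← ha]
      field_simp
    -- second derivative of g at 0
    have hf2 : HasDerivAt (deriv f) (deriv (deriv f) 0) 0 := by
      have : DifferentiableOn ℂ (deriv f) (ball 0 1) :=
        ((hd.analyticOnNhd isOpen_ball).deriv).differentiableOn
      exact (this.differentiableAt (isOpen_ball.mem_nhds h0)).hasDerivAt
    have hfd : HasDerivAt f (deriv f 0) 0 :=
      (hd.differentiableAt (isOpen_ball.mem_nhds h0)).hasDerivAt
    have hDF : HasDerivAt F ((deriv (deriv f) 0 * (1 - (starRingEnd ℂ) a * a)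
        + 2 * (starRingEnd ℂ) a * (deriv f 0) ^ 2) / (1 - (starRingEnd ℂ) a * a) ^ 2) 0 := by
      have hnum : HasDerivAt (fun z => deriv f z * (1 - (starRingEnd ℂ) a * a))
          (deriv (deriv f) 0 * (1 - (starRingEnd ℂ) a * a)) 0 := hf2.mul_const _
      have hbase : HasDerivAt (fun z => 1 - (starRingEnd ℂ) a * f z)
          (-((starRingEnd ℂ) a * deriv f 0)) 0 := by
        simpa using (hfd.const_mul ((starRingEnd ℂ) a)).const_sub 1
      have hden2 : HasDerivAt (fun z => (1 - (starRingEnd ℂ) a * f z) ^ 2)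
          (2 * (1 - (starRingEnd ℂ) a * f 0) ^ 1 * (-((starRingEnd ℂ) a * deriv f 0))) 0 := by
        simpa using hbase.fun_pow 2
      have hden0 : (1 - (starRingEnd ℂ) a * f 0) ^ 2 ≠ 0 := by
        rw [← ha]; exact pow_ne_zero 2 hne
      have h3 := hnum.div hden2 hden0
      refine h3.congr_deriv ?_
      rw [← ha]
      field_simp
      ring
    have hgg0 : deriv (deriv g) 0 = (deriv (deriv f) 0 * (1 - (starRingEnd ℂ) a * a)
        + 2 * (starRingEnd ℂ) a * (deriv f 0) ^ 2) / (1 - (starRingEnd ℂ) a * a) ^ 2 := by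
      have he : deriv g =ᶠ[nhds 0] F := eventually_of_mem (isOpen_ball.mem_nhds h0) hEq
      rw [he.deriv_eq]
      exact hDF.deriv
    -- the function h = dslope g 0
    set h : ℂ → ℂ := dslope g 0 with hh
    have hhd : DifferentiableOn ℂ h (ball 0 1) :=
      (Complex.differentiableOn_dslope (isOpen_ball.mem_nhds h0)).mpr hgd
    have hhb : ∀ z ∈ ball (0:ℂ) 1, ‖h z‖ ≤ 1 := by
      intro z hz
      have := Complex.norm_dslope_le_div_of_mapsTo_ball hgd (hmaps.mono_right ball_subset_closedBall) hz
      simpa using this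
    have hh0 : h 0 = deriv f 0 / (1 - (starRingEnd ℂ) a * a) := by
      rw [hh, dslope_same, hgd0]
    -- deriv h 0 = (1/2) * second derivative of g
    have hderh : deriv h 0 = deriv (deriv g) 0 / 2 := by
      obtain ⟨q, hq⟩ := hgd.analyticAt (isOpen_ball.mem_nhds h0)
      have hq2 : HasFPowerSeriesAt h q.fslope 0 := hq.has_fpower_series_dslope_fslope
      have e1 : deriv h 0 = q.fslope.coeff 1 := hq2.deriv
      have e2 : q.fslope.coeff 1 = q.coeff 2 := FormalMultilinearSeries.coeff_fslope
      obtain ⟨r, hr⟩ := hq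
      have e3 := hr.factorial_smul (1 : ℂ) 2
      rw [FormalMultilinearSeries.apply_eq_pow_smul_coeff] at e3
      have e4 : iteratedFDeriv ℂ 2 g 0 (fun _ => (1:ℂ)) = deriv (deriv g) 0 := by
        rw [← iteratedDeriv_eq_iteratedFDeriv]
        rw [iteratedDeriv_succ, iteratedDeriv_one]
      rw [e4] at e3
      rw [e1, e2, ← e3]
      simp [Nat.factorial, nsmul_eq_mul]
    -- apply schur1 to h
    have hkey := schur1 hhd hhb
    rw [hderh, hgg0, hh0] at hkey
    -- now translate to the required inequality
    set N := ‖deriv (deriv f) 0 * (1 - (starRingEnd ℂ) a * a)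
        + 2 * (starRingEnd ℂ) a * (deriv f 0) ^ 2‖ with hN
    set t := ‖deriv f 0‖ with ht
    set ρ := 1 - ‖a‖ ^ 2 with hρ
    have habs1 : ‖(deriv (deriv f) 0 * (1 - (starRingEnd ℂ) a * a)
        + 2 * (starRingEnd ℂ) a * (deriv f 0) ^ 2) / (1 - (starRingEnd ℂ) a * a) ^ 2 / 2‖
        = N / ρ ^ 2 / 2 := by
      rw [norm_div, norm_div, norm_pow, abs_rho haa.le, Complex.norm_two, ← hN, ← hρ]
    have habs2 : ‖deriv f 0 / (1 - (starRingEnd ℂ) a * a)‖ = t / ρ := by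
      rw [norm_div, abs_rho haa.le, ← ht, ← hρ]
    rw [habs1, habs2] at hkey
    -- hkey : N / ρ^2 / 2 ≤ 1 - (t/ρ)^2
    have h5 : N ≤ (1 - (t/ρ)^2) * (ρ^2 * 2) := by
      rwa [div_div, div_le_iff₀ (by positivity)] at hkey
    have h6 : (1 - (t/ρ)^2) * (ρ^2 * 2) = 2 * (ρ^2 - t^2) := by
      field_simp
    rw [h6] at h5
    exact h5
  · push_neg at hs
    obtain ⟨z₀, hz₀, hge⟩ := hs
    have h1 : ‖f z₀‖ = 1 := le_antisymm (hb z₀ hz₀) hge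
    have hcon := const_of_abs_eq_one hd hb hz₀ h1
    have hd0 : ∀ z ∈ ball (0:ℂ) 1, deriv f z = 0 := fun z hz => deriv_eqOn_const hcon hz
    have hdd0 : deriv (deriv f) 0 = 0 := by
      have : EqOn (deriv f) (Function.const ℂ 0) (ball 0 1) := fun z hz => hd0 z hz
      exact deriv_eqOn_const this h0
    have hf0 : ‖f 0‖ = 1 := by rw [hcon h0]; exact h1
    rw [hdd0, hd0 0 h0, hf0]
    norm_num
private lemma coeff_iteratedDeriv {ω : ℂ → ℂ} {c : ℕ → ℂ}
    (hc : ∀ z ∈ ball (0:ℂ) 1, HasSum (fun n : ℕ => c (n + 1) * z ^ (n + 1)) (ω z)) :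
    ∀ n : ℕ, 1 ≤ n → (n ! : ℂ) * c n = iteratedDeriv n ω 0 := by
  classical
  set c' : ℕ → ℂ := fun n => if n = 0 then 0 else c n with hc'
  set p := FormalMultilinearSeries.ofScalars ℂ c' with hp
  have hhalf : (1/2 : ℂ) ∈ ball (0:ℂ) 1 := by
    rw [mem_ball_zero_iff]
    norm_num
  have hsum : Summable (fun n => c (n + 1) * (1/2 : ℂ) ^ (n + 1)) := (hc _ hhalf).summable
  have htend : Tendsto (fun n => ‖c (n + 1) * (1/2 : ℂ) ^ (n + 1)‖) atTop (nhds 0) := by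
    simpa using hsum.tendsto_atTop_zero.norm
  obtain ⟨C, hC⟩ := htend.bddAbove_range
  have hCnn : 0 ≤ C := le_trans (norm_nonneg _) (hC (Set.mem_range_self 0))
  have hcast : ((2⁻¹ : ℝ≥0) : ℝ) = 1/2 := by norm_num
  have hbound : ∀ n : ℕ, ‖p n‖ * ((2⁻¹ : ℝ≥0) : ℝ) ^ n ≤ C := by
    intro n
    rw [FormalMultilinearSeries.ofScalars_norm ℂ c' n, hcast]
    match n with
    | 0 => simpa [hc'] using hCnn
    | Nat.succ m =>
      have h8 : ‖c (m + 1) * (1/2 : ℂ) ^ (m + 1)‖ ≤ C := hC (Set.mem_range_self m)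
      rw [norm_mul, norm_pow] at h8
      have h2 : ‖(1/2 : ℂ)‖ = (1/2 : ℝ) := by norm_num
      rw [h2] at h8
      simpa [hc'] using h8
  have hball : HasFPowerSeriesOnBall ω p 0 ((2⁻¹ : ℝ≥0) : ℝ≥0∞) := by
    refine ⟨p.le_radius_of_bound C hbound, by norm_num, ?_⟩
    intro y hy
    have hy1 : y ∈ ball (0:ℂ) 1 := by
      rw [mem_emetric_ball_zero_iff] at hy
      rw [mem_ball_zero_iff]
      have h9 : (‖y‖₊ : ℝ) < ((2⁻¹ : ℝ≥0) : ℝ) := by exact_mod_cast hy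
      rw [hcast] at h9
      have h3 : ‖y‖ < 1/2 := by simpa using h9
      linarith [h3]
    have hsum2 := hc y hy1
    have f0 : c' 0 = 0 := by simp [hc']
    have key : HasSum (fun n => c' n * y ^ n) (ω y) := by
      have h4 : HasSum (fun n => c' (n + 1) * y ^ (n + 1)) (ω y) := by
        simpa [hc'] using hsum2
      have h5 := (hasSum_nat_add_iff (f := fun n => c' n * y ^ n) 1).mp h4
      simpa [f0] using h5
    rw [zero_add]
    rw [show (fun n => p n (fun _ => y)) = fun n => c' n * y ^ n from funext fun n => by
      rw [hp, FormalMultilinearSeries.ofScalars_apply_eq, smul_eq_mul]]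
    exact key
  have hcoeff : ∀ n : ℕ, p.coeff n = c' n := by
    intro n
    have e := FormalMultilinearSeries.ofScalars_apply_eq (E := ℂ) (c := c') (1:ℂ) n
    rw [FormalMultilinearSeries.apply_eq_pow_smul_coeff] at e
    exact FormalMultilinearSeries.coeff_ofScalars
  intro n hn
  have h6 := hball.factorial_smul (1 : ℂ) n
  rw [FormalMultilinearSeries.apply_eq_pow_smul_coeff, ← iteratedDeriv_eq_iteratedFDeriv] at h6
  rw [← h6, hcoeff n]
  have h7 : c' n = c n := by
    simp [hc', Nat.one_le_iff_ne_zero.mp hn]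
  rw [h7]
  simp [nsmul_eq_mul]

theorem stmt_6 (ω : ℂ → ℂ) (c : ℕ → ℂ)
    (hd : DifferentiableOn ℂ ω (ball 0 1))
    (h0 : ω 0 = 0)
    (hb : ∀ z ∈ ball (0:ℂ) 1, ‖deriv ω z‖ ≤ 1)
    (hc : ∀ z ∈ ball (0:ℂ) 1, HasSum (fun n : ℕ => c (n + 1) * z ^ (n + 1)) (ω z))
    (h1 : 4/7 ≤ ‖c 1‖)
    (h2 : ‖c 1‖ ≤ 1) :
    ‖c 3 - c 1 * c 2‖ ≤ (5/6) * ‖c 1‖ * (1 - ‖c 1‖^2) := by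
  classical
  have hball0 : (0:ℂ) ∈ ball (0:ℂ) 1 := mem_ball_self one_pos
  have hfd : DifferentiableOn ℂ (deriv ω) (ball 0 1) :=
    ((hd.analyticOnNhd isOpen_ball).deriv).differentiableOn
  have hco := coeff_iteratedDeriv hc
  have e1 : deriv ω 0 = c 1 := by
    have h := hco 1 le_rfl
    rw [iteratedDeriv_one] at h
    rw [← h]
    simp
  have e2 : deriv (deriv ω) 0 = 2 * c 2 := by
    have h := hco 2 (by norm_num)
    rw [iteratedDeriv_succ, iteratedDeriv_one] at h
    rw [← h]
    norm_num
  have e3 : deriv (deriv (deriv ω)) 0 = 6 * c 3 := by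
    have h := hco 3 (by norm_num)
    rw [iteratedDeriv_succ, iteratedDeriv_succ, iteratedDeriv_one] at h
    rw [← h]
    norm_num [Nat.factorial]
  by_cases hcase : ‖c 1‖ < 1
  · have hρpos : 0 < 1 - ‖c 1‖ ^ 2 := by nlinarith [norm_nonneg (c 1)]
    have s1 := schur1 hfd hb
    rw [e1, e2] at s1
    have s1' : 2 * ‖c 2‖ ≤ 1 - ‖c 1‖ ^ 2 := by
      rwa [norm_mul, Complex.norm_two] at s1
    have s2 := schur2 hfd hb
    rw [e1, e2, e3, rho_eq (c 1)] at s2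
    have habs2 : ‖(6:ℂ) * c 3 * ((1 - ‖c 1‖ ^ 2 : ℝ):ℂ)
        + 2 * (starRingEnd ℂ) (c 1) * (2 * c 2)^2‖
        = 2 * ‖(3:ℂ) * c 3 * ((1 - ‖c 1‖ ^ 2 : ℝ):ℂ)
          + 4 * (starRingEnd ℂ) (c 1) * (c 2)^2‖ := by
      rw [show (6:ℂ) * c 3 * ((1 - ‖c 1‖ ^ 2 : ℝ):ℂ)
          + 2 * (starRingEnd ℂ) (c 1) * (2 * c 2)^2
        = 2 * ((3:ℂ) * c 3 * ((1 - ‖c 1‖ ^ 2 : ℝ):ℂ)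
          + 4 * (starRingEnd ℂ) (c 1) * (c 2)^2) from by ring, norm_mul, Complex.norm_two]
    rw [habs2, norm_mul, Complex.norm_two] at s2
    have hX : ‖(3:ℂ) * c 3 * ((1 - ‖c 1‖ ^ 2 : ℝ):ℂ)
        + 4 * (starRingEnd ℂ) (c 1) * (c 2)^2‖
        ≤ (1 - ‖c 1‖ ^ 2)^2 - (2 * ‖c 2‖)^2 := by
      nlinarith [s2]
    -- triangle inequality
    have expand : (3:ℂ) * (c 3 - c 1 * c 2) * ((1 - ‖c 1‖ ^ 2 : ℝ):ℂ)
        = ((3:ℂ) * c 3 * ((1 - ‖c 1‖ ^ 2 : ℝ):ℂ)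
            + 4 * (starRingEnd ℂ) (c 1) * (c 2)^2)
          - 4 * (starRingEnd ℂ) (c 1) * (c 2)^2
          - 3 * ((1 - ‖c 1‖ ^ 2 : ℝ):ℂ) * (c 1 * c 2) := by
      ring
    set X := (3:ℂ) * c 3 * ((1 - ‖c 1‖ ^ 2 : ℝ):ℂ)
        + 4 * (starRingEnd ℂ) (c 1) * (c 2)^2 with hXdef
    set A := (4:ℂ) * (starRingEnd ℂ) (c 1) * (c 2)^2 with hAdef
    set B := (3:ℂ) * ((1 - ‖c 1‖ ^ 2 : ℝ):ℂ) * (c 1 * c 2) with hBdef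
    have htri : ‖X - A - B‖ ≤ ‖X‖ + ‖A‖ + ‖B‖ := by
      have t1 : ‖X - A - B‖ ≤ ‖X - A‖ + ‖B‖ := by
        simpa [sub_eq_add_neg] using norm_add_le (X - A) (-B)
      have t2 : ‖X - A‖ ≤ ‖X‖ + ‖A‖ := by
        simpa [sub_eq_add_neg] using norm_add_le X (-A)
      linarith
    have hAbs : ‖A‖ = 4 * ‖c 1‖ * ‖c 2‖ ^ 2 := by
      rw [hAdef, norm_mul, norm_mul, norm_pow, Complex.norm_conj]
      norm_num
    have habsρ : ‖((1 - ‖c 1‖ ^ 2 : ℝ):ℂ)‖ = 1 - ‖c 1‖ ^ 2 := by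
      rw [Complex.norm_real, Real.norm_eq_abs]
      exact abs_of_nonneg hρpos.le
    have hBbs : ‖B‖ = 3 * (1 - ‖c 1‖ ^ 2) * (‖c 1‖ * ‖c 2‖) := by
      rw [hBdef, norm_mul, norm_mul, norm_mul, habsρ]
      norm_num
    have hLHS : ‖(3:ℂ) * (c 3 - c 1 * c 2) * ((1 - ‖c 1‖ ^ 2 : ℝ):ℂ)‖
        = 3 * ‖c 3 - c 1 * c 2‖ * (1 - ‖c 1‖ ^ 2) := by
      rw [norm_mul, norm_mul, habsρ]
      norm_num
    have hmain : 3 * ‖c 3 - c 1 * c 2‖ * (1 - ‖c 1‖ ^ 2)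
        ≤ ((1 - ‖c 1‖ ^ 2)^2 - (2 * ‖c 2‖)^2)
          + 4 * ‖c 1‖ * ‖c 2‖ ^ 2
          + 3 * (1 - ‖c 1‖ ^ 2) * (‖c 1‖ * ‖c 2‖) := by
      rw [← hLHS]
      rw [expand]
      calc ‖X - A - B‖ ≤ ‖X‖ + ‖A‖ + ‖B‖ := htri
        _ ≤ _ := by rw [hAbs, hBbs]; linarith [hX]
    -- scalar optimization
    set r := ‖c 1‖ with hrdef
    set k := ‖c 2‖ with hkdef
    set ρ := 1 - r ^ 2 with hρdef
    have hknn : 0 ≤ k := norm_nonneg _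
    have hrnn : 0 ≤ r := norm_nonneg _
    have hfactor2 : 0 ≤ (5 * r / 2 - 1) * ρ - (1 - r) * (2 * k) := by
      nlinarith [mul_nonneg (by linarith : (0:ℝ) ≤ 1 - r) (by linarith [s1'] : (0:ℝ) ≤ ρ - 2 * k),
        mul_nonneg (by linarith : (0:ℝ) ≤ 7 * r / 2 - 2) hρpos.le]
    set L := ‖c 3 - c 1 * c 2‖ with hLdef
    clear_value X A B r k ρ L
    have hP : 0 ≤ (ρ - 2*k) * ((5*r/2 - 1) * ρ - (1 - r) * (2*k)) :=
      mul_nonneg (by linarith [s1']) hfactor2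
    have hexp : (ρ - 2*k) * ((5*r/2 - 1) * ρ - (1 - r) * (2*k))
        = 5/2 * r * ρ^2 - (ρ^2 - (2*k)^2 + 4*r*k^2 + 3*ρ*(r*k)) := by
      ring
    have hfin : 3 * L * ρ ≤ 5/2 * r * ρ^2 := by
      rw [hexp] at hP
      linarith [hmain]
    have h22 : (3*ρ) * L ≤ (3*ρ) * (5/6 * r * ρ) := by
      nlinarith [hfin]
    exact le_of_mul_le_mul_left h22 (by linarith)
  · have hr1 : ‖c 1‖ = 1 := le_antisymm h2 (not_lt.mp hcase)
    have hf01 : ‖deriv ω 0‖ = 1 := by rw [e1]; exact hr1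
    have hcon := const_of_abs_eq_one hfd hb hball0 hf01
    have hd1 : deriv (deriv ω) 0 = 0 := deriv_eqOn_const hcon hball0
    have hd2 : deriv (deriv (deriv ω)) 0 = 0 := by
      have hEq : EqOn (deriv (deriv ω)) (Function.const ℂ 0) (ball 0 1) :=
        fun z hz => deriv_eqOn_const hcon hz
      exact deriv_eqOn_const hEq hball0
    have hc2 : c 2 = 0 := by
      have h := e2.symm.trans hd1
      simpa using h
    have hc3 : c 3 = 0 := by
      have h := e3.symm.trans hd2
      simpa using h
    rw [hc2, hc3, hr1]
    norm_num
end

section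
/- Fix t with 4/7 ≤ t ≤ 1 and define ω₂(z) = ∫₀^z (t + w)/(1 + tw) dw for z ∈ 𝔻. Then ω₂ ∈ 𝓑'₀, its power series coefficients satisfy c₁ = t, c₂ = (1/2)(1 − t²), c₃ = −(1/3)t(1 − t²), and equality |c₃ − c₁c₂| = (5/6)·t·(1 − t²) holds, so the bound of Theorem 1 is sharp for 4/7 ≤ |c₁| ≤ 1. -/
open Complex Metric

private lemma norm_aux (t : ℝ) (ht0 : 0 ≤ t) (ht1 : t ≤ 1) (z : ℂ)
    (hz : ‖z‖ < 1) (s : ℝ) (hs0 : 0 ≤ s) (hs1 : s ≤ 1) :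
    ‖(t : ℂ) * ((s : ℂ) * z)‖ < 1 := by
  rw [norm_mul, norm_mul, Complex.norm_real, Complex.norm_real,
    Real.norm_of_nonneg ht0, Real.norm_of_nonneg hs0]
  calc t * (s * ‖z‖) ≤ 1 * (1 * ‖z‖) := by
        apply mul_le_mul ht1 ?_ (by positivity) zero_le_one
        exact mul_le_mul hs1 le_rfl (norm_nonneg _) zero_le_one
    _ < 1 := by simpa using hz

private lemma ne_zero_aux (t : ℝ) (ht0 : 0 ≤ t) (ht1 : t ≤ 1) (z : ℂ)
    (hz : ‖z‖ < 1) (s : ℝ) (hs0 : 0 ≤ s) (hs1 : s ≤ 1) :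
    1 + (t : ℂ) * ((s : ℂ) * z) ≠ 0 :=
  Complex.slitPlane_ne_zero
    (Complex.mem_slitPlane_of_norm_lt_one (norm_aux t ht0 ht1 z hz s hs0 hs1))

/-- Derivative of the primitive. -/
private lemma hasDerivAt_G (t : ℝ) (ht0 : 0 < t) (ht1 : t ≤ 1) (z : ℂ)
    (hz : ‖z‖ < 1) (s : ℝ) (hs0 : 0 ≤ s) (hs1 : s ≤ 1) :
    HasDerivAt (fun u : ℝ => (u : ℂ) * z / t +
        ((t : ℂ)^2 - 1) / (t : ℂ)^2 * Complex.log (1 + (t : ℂ) * ((u : ℂ) * z)))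
      ((((t : ℂ) + (s : ℂ) * z) / (1 + (t : ℂ) * ((s : ℂ) * z))) * z) s := by
  have hts : (t : ℂ) ≠ 0 := by exact_mod_cast ht0.ne'
  have hmem : 1 + (t : ℂ) * ((s : ℂ) * z) ∈ slitPlane :=
    Complex.mem_slitPlane_of_norm_lt_one (norm_aux t ht0.le ht1 z hz s hs0 hs1)
  have hne : 1 + (t : ℂ) * ((s : ℂ) * z) ≠ 0 := Complex.slitPlane_ne_zero hmem
  -- complex-variable derivative
  have hG : HasDerivAt (fun w : ℂ => w * z / t +
      ((t : ℂ)^2 - 1) / (t : ℂ)^2 * Complex.log (1 + (t : ℂ) * (w * z)))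
      ((((t : ℂ) + (s : ℂ) * z) / (1 + (t : ℂ) * ((s : ℂ) * z))) * z) (s : ℂ) := by
    have h1 : HasDerivAt (fun w : ℂ => w * z / t) (z / t) (s : ℂ) := by
      simpa [mul_div_assoc] using (hasDerivAt_id (s : ℂ)).mul_const (z / t)
    have hinner : HasDerivAt (fun w : ℂ => 1 + (t : ℂ) * (w * z)) ((t : ℂ) * z) (s : ℂ) := by
      simpa [mul_comm, mul_assoc, mul_left_comm] using
        (((hasDerivAt_id (s : ℂ)).mul_const z).const_mul (t : ℂ)).const_add 1
    have h2 : HasDerivAt (fun w : ℂ => Complex.log (1 + (t : ℂ) * (w * z)))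
        ((1 + (t : ℂ) * ((s : ℂ) * z))⁻¹ * ((t : ℂ) * z)) (s : ℂ) := by
      have := (Complex.hasDerivAt_log hmem).comp (s : ℂ) hinner; exact this
    have := h1.add ((h2.const_mul (((t : ℂ)^2 - 1) / (t : ℂ)^2)))
    refine this.congr_deriv ?_
    field_simp
    linear_combination -z * mul_inv_cancel₀ hne
  simpa using hG.comp_ofReal

/-- Closed form of the integral. -/
private lemma omega_eq (t : ℝ) (ht0 : 0 < t) (ht1 : t ≤ 1) (z : ℂ)
    (hz : ‖z‖ < 1) :
    (∫ s in (0:ℝ)..1, (((t : ℂ) + (s : ℂ) * z) / (1 + (t : ℂ) * ((s : ℂ) * z))) * z)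
      = z / t + ((t : ℂ)^2 - 1) / (t : ℂ)^2 * Complex.log (1 + (t : ℂ) * z) := by
  have hcont : ContinuousOn
      (fun s : ℝ => (((t : ℂ) + (s : ℂ) * z) / (1 + (t : ℂ) * ((s : ℂ) * z))) * z)
      (Set.uIcc (0:ℝ) 1) := by
    rw [Set.uIcc_of_le zero_le_one]
    apply ContinuousOn.mul ?_ continuousOn_const
    apply ContinuousOn.div
    · fun_prop
    · fun_prop
    · intro s hs
      exact ne_zero_aux t ht0.le ht1 z hz s hs.1 hs.2
  have key := intervalIntegral.integral_eq_sub_of_hasDerivAt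
    (f := fun u : ℝ => (u : ℂ) * z / t +
        ((t : ℂ)^2 - 1) / (t : ℂ)^2 * Complex.log (1 + (t : ℂ) * ((u : ℂ) * z)))
    (fun s hs => by
      rw [Set.uIcc_of_le zero_le_one] at hs
      exact hasDerivAt_G t ht0 ht1 z hz s hs.1 hs.2)
    (hcont.intervalIntegrable)
  rw [key]
  simp [Complex.log_one]

theorem stmt_7 (t : ℝ) (ht0 : 4/7 ≤ t) (ht1 : t ≤ 1)
    (ω₂ : ℂ → ℂ)
    (hω₂ : ω₂ = fun z : ℂ =>
      ∫ s in (0:ℝ)..1, (((t : ℂ) + (s : ℂ) * z) / (1 + (t : ℂ) * ((s : ℂ) * z))) * z) :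
    DifferentiableOn ℂ ω₂ (ball 0 1) ∧ ω₂ 0 = 0 ∧
    (∀ z ∈ ball (0:ℂ) 1, ‖deriv ω₂ z‖ ≤ 1) ∧
    ∃ c : ℕ → ℂ,
      (∀ z ∈ ball (0:ℂ) 1, HasSum (fun n : ℕ => c (n + 1) * z ^ (n + 1)) (ω₂ z)) ∧
      c 1 = (t : ℂ) ∧ c 2 = (1 - (t : ℂ)^2) / 2 ∧ c 3 = -((t : ℂ) * (1 - (t : ℂ)^2)) / 3 ∧
      ‖c 3 - c 1 * c 2‖ = (5/6) * t * (1 - t^2) := by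
  have htpos : (0:ℝ) < t := lt_of_lt_of_le (by norm_num) ht0
  have hts : (t : ℂ) ≠ 0 := by exact_mod_cast htpos.ne'
  set a : ℂ := ((t : ℂ)^2 - 1) / (t : ℂ)^2 with ha
  set g : ℂ → ℂ := fun z => z / t + a * Complex.log (1 + (t : ℂ) * z) with hg
  have hball : ∀ z ∈ ball (0:ℂ) 1, ‖z‖ < 1 := by
    intro z hz; simpa [Complex.dist_eq] using hz
  have hωg : ∀ z ∈ ball (0:ℂ) 1, ω₂ z = g z := by
    intro z hz
    rw [hω₂]
    exact omega_eq t htpos ht1 z (hball z hz)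
  have hslit : ∀ z ∈ ball (0:ℂ) 1, 1 + (t : ℂ) * z ∈ slitPlane := by
    intro z hz
    have := norm_aux t htpos.le ht1 z (hball z hz) 1 zero_le_one le_rfl
    simp only [Complex.ofReal_one, one_mul] at this
    exact Complex.mem_slitPlane_of_norm_lt_one this
  have hgderiv : ∀ z ∈ ball (0:ℂ) 1,
      HasDerivAt g (((t : ℂ) + z) / (1 + (t : ℂ) * z)) z := by
    intro z hz
    have hmem := hslit z hz
    have hne : 1 + (t : ℂ) * z ≠ 0 := Complex.slitPlane_ne_zero hmem
    have h1 : HasDerivAt (fun w : ℂ => w / t) (1 / t) z := by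
      simpa [div_eq_mul_inv] using (hasDerivAt_id z).mul_const ((t : ℂ))⁻¹
    have hinner : HasDerivAt (fun w : ℂ => 1 + (t : ℂ) * w) ((t : ℂ)) z := by
      simpa using ((hasDerivAt_id z).const_mul (t : ℂ)).const_add 1
    have h2 : HasDerivAt (fun w : ℂ => Complex.log (1 + (t : ℂ) * w))
        ((1 + (t : ℂ) * z)⁻¹ * (t : ℂ)) z := by
      have := (Complex.hasDerivAt_log hmem).comp z hinner; exact this
    have := h1.add (h2.const_mul a)
    refine this.congr_deriv ?_
    rw [ha]
    field_simp
    ring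
  have hωderiv : ∀ z ∈ ball (0:ℂ) 1,
      HasDerivAt ω₂ (((t : ℂ) + z) / (1 + (t : ℂ) * z)) z := by
    intro z hz
    refine (hgderiv z hz).congr_of_eventuallyEq ?_
    filter_upwards [isOpen_ball.mem_nhds hz] with w hw
    exact hωg w hw
  refine ⟨?_, ?_, ?_, ?_⟩
  · intro z hz
    exact (hωderiv z hz).differentiableAt.differentiableWithinAt
  · rw [hω₂]; simp
  · intro z hz
    rw [(hωderiv z hz).deriv]
    have hzn : ‖z‖ < 1 := hball z hz
    have hne : 1 + (t : ℂ) * z ≠ 0 := Complex.slitPlane_ne_zero (hslit z hz)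
    rw [norm_div, div_le_one (norm_pos_iff.mpr hne)]
    have hsq : ‖(t : ℂ) + z‖^2 ≤ ‖1 + (t : ℂ) * z‖^2 := by
      rw [Complex.sq_norm, Complex.sq_norm]
      have hz2 : z.re^2 + z.im^2 < 1 := by
        have := Complex.sq_norm z
        rw [Complex.normSq_apply] at this
        nlinarith [norm_nonneg z]
      simp only [Complex.normSq_apply, Complex.add_re, Complex.add_im, Complex.mul_re,
        Complex.mul_im, Complex.ofReal_re, Complex.ofReal_im, Complex.one_re, Complex.one_im]
      nlinarith [mul_nonneg (by nlinarith : (0:ℝ) ≤ 1 - t^2)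
        (by nlinarith : (0:ℝ) ≤ 1 - z.re^2 - z.im^2)]
    nlinarith [norm_nonneg ((t : ℂ) + z), norm_nonneg (1 + (t : ℂ) * z)]
  · refine ⟨fun n => if n = 1 then (t : ℂ) else a * ((-1)^(n+1) * (t : ℂ)^n / n), ?_, ?_, ?_, ?_, ?_⟩
    · intro z hz
      have hzn : ‖z‖ < 1 := hball z hz
      have hn1 : ‖(t : ℂ) * z‖ < 1 := by
        simpa using norm_aux t htpos.le ht1 z hzn 1 zero_le_one le_rfl
      set f : ℕ → ℂ := fun n => a * ((-1)^(n+1) * ((t:ℂ)*z)^n / n) with hf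
      have hlog : HasSum f (a * Complex.log (1 + (t:ℂ)*z)) :=
        (Complex.hasSum_taylorSeries_log hn1).mul_left a
      have hshift : HasSum (fun n => f (n+1)) (a * Complex.log (1 + (t:ℂ)*z)) := by
        have := (hasSum_nat_add_iff' (f := f) 1).mpr hlog
        simpa [hf] using this
      have hsingle : HasSum (fun n : ℕ => if n = 0 then z / t else 0) (z / t) :=
        hasSum_ite_eq 0 (z / t)
      have hsum := hsingle.add hshift
      rw [hωg z hz]
      show HasSum _ (z / (t:ℂ) + a * Complex.log (1 + (t:ℂ) * z))
      convert hsum using 1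
      funext n
      rcases n with _ | m
      · show (if (1:ℕ) = 1 then (t:ℂ) else a * ((-1)^(1+1) * (t:ℂ)^1 / 1)) * z ^ (0+1)
          = (if (0:ℕ) = 0 then z / (t:ℂ) else 0) + f (0+1)
        rw [if_pos rfl, if_pos rfl, hf]
        simp only [pow_one, zero_add]
        rw [ha]
        field_simp
        ring
      · show (if m + 2 = 1 then (t:ℂ) else a * ((-1)^(m+2+1) * (t:ℂ)^(m+2) / (↑(m+2):ℂ)))
            * z ^ (m+2)
          = (if m + 1 = 0 then z / (t:ℂ) else 0) + f (m+1+1)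
        rw [if_neg (by omega), if_neg (by omega), hf]
        push_cast
        ring
    · simp
    · show (if (2:ℕ) = 1 then (t:ℂ) else a * ((-1)^(2+1) * (t:ℂ)^2 / 2)) = _
      rw [if_neg (by norm_num), ha]
      field_simp
      ring
    · show (if (3:ℕ) = 1 then (t:ℂ) else a * ((-1)^(3+1) * (t:ℂ)^3 / 3)) = _
      rw [if_neg (by norm_num), ha]
      field_simp
      ring
    · show ‖(if (3:ℕ) = 1 then (t:ℂ) else a * ((-1)^(3+1) * (t:ℂ)^3 / 3))
          - (if (1:ℕ) = 1 then (t:ℂ) else a * ((-1)^(1+1) * (t:ℂ)^1 / 1))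
            * (if (2:ℕ) = 1 then (t:ℂ) else a * ((-1)^(2+1) * (t:ℂ)^2 / 2))‖ = _
      rw [if_neg (by norm_num : ¬(3:ℕ)=1), if_pos rfl, if_neg (by norm_num : ¬(2:ℕ)=1), ha]
      have : ((t:ℂ)^2-1)/(t:ℂ)^2 * ((-1)^(3+1) * (t:ℂ)^3 / 3)
            - (t:ℂ) * (((t:ℂ)^2-1)/(t:ℂ)^2 * ((-1)^(2+1) * (t:ℂ)^2 / 2))
          = ((5/6 * t * (t^2 - 1) : ℝ) : ℂ) := by
        push_cast; field_simp; ring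
      rw [this, Complex.norm_real, Real.norm_eq_abs]
      rw [abs_of_nonpos (by nlinarith)]
      ring
end

section
/- Let ω ∈ 𝓑'₀ have power series expansion ω(z) = c₁z + c₂z² + c₃z³ + ⋯ on 𝔻. Then |c₃ − c₁c₂| ≤ 1/3. -/
lemma polyineq (t w : ℝ) (ht0 : 0 ≤ t) (ht1 : t ≤ 1) (hw0 : 0 ≤ w) (hw1 : w ≤ 1) :
    (1 - t^2) * (2*(1-w^2) + 2*t*w^2 + 3*t*w) ≤ 2 := by
  rcases le_or_gt t (7/9) with h | h
  · nlinarith [mul_nonneg (by nlinarith : (0:ℝ) ≤ 1 - t^2) (sq_nonneg (4*(1-t)*w - 3*t)),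
      mul_nonneg (mul_nonneg (sq_nonneg t) (by linarith : (0:ℝ) ≤ 1 - t)) (by linarith : (0:ℝ) ≤ 7 - 9*t),
      sq_nonneg t, mul_nonneg ht0 hw0]
  · nlinarith [mul_nonneg (mul_nonneg (by nlinarith : (0:ℝ) ≤ 1 - t^2) (by linarith : (0:ℝ) ≤ 1 - t)) (sq_nonneg w),
      mul_nonneg (mul_nonneg (by nlinarith : (0:ℝ) ≤ 1 - t^2) ht0) (by linarith : (0:ℝ) ≤ 1 - w),
      mul_nonneg ht0 (by nlinarith : (0:ℝ) ≤ 3*t^2 + 2*t - 3)]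

open Complex Metric

lemma mobius_bound (a w : ℂ) (ha : ‖a‖ ≤ 1) (hw : ‖w‖ ≤ 1) :
    ‖w - a‖ ≤ ‖1 - (starRingEnd ℂ) a * w‖ := by
  have ha' : Complex.normSq a ≤ 1 := by
    rw [← Complex.sq_norm]; nlinarith [norm_nonneg a]
  have hw' : Complex.normSq w ≤ 1 := by
    rw [← Complex.sq_norm]; nlinarith [norm_nonneg w]
  have key : Complex.normSq (w - a) ≤ Complex.normSq (1 - (starRingEnd ℂ) a * w) := by
    simp only [Complex.normSq_apply, Complex.sub_re, Complex.sub_im, Complex.mul_re,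
      Complex.mul_im, Complex.one_re, Complex.one_im, Complex.conj_re, Complex.conj_im] at *
    nlinarith [ha', hw']
  simpa only [Complex.norm_def] using Real.sqrt_le_sqrt key

lemma denom_ne (a w : ℂ) (ha : ‖a‖ < 1) (hw : ‖w‖ ≤ 1) :
    (1 : ℂ) - (starRingEnd ℂ) a * w ≠ 0 := by
  intro h
  have h2 : ‖(starRingEnd ℂ) a * w‖ = 1 := by
    have : (starRingEnd ℂ) a * w = 1 := by linear_combination -h
    rw [this, norm_one]
  rw [norm_mul, Complex.norm_conj] at h2
  nlinarith [norm_nonneg w, norm_nonneg a]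

-- Schwarz–Pick at the origin
lemma SP (g : ℂ → ℂ) (hg : DifferentiableOn ℂ g (ball 0 1))
    (hgb : ∀ z ∈ ball (0:ℂ) 1, ‖g z‖ ≤ 1)
    (hlt : ‖g 0‖ < 1) :
    ‖deriv g 0‖ ≤ 1 - ‖g 0‖^2 := by
  set k : ℂ := (starRingEnd ℂ) (g 0) with hk
  set χ : ℂ → ℂ := fun z => (g z - g 0) / (1 - k * g z) with hχ
  have hden : ∀ z ∈ ball (0:ℂ) 1, (1:ℂ) - k * g z ≠ 0 := fun z hz =>
    denom_ne (g 0) (g z) hlt (hgb z hz)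
  have hχd : DifferentiableOn ℂ χ (ball 0 1) :=
    (hg.sub_const _).div ((differentiableOn_const _).sub ((differentiableOn_const k).mul hg)) hden
  have hχ0 : χ 0 = 0 := by simp [hχ]
  have hχb : ∀ z ∈ ball (0:ℂ) 1, ‖χ z‖ ≤ 1 := by
    intro z hz
    rw [hχ, norm_div]
    rw [div_le_one (norm_pos_iff.mpr (hden z hz))]
    exact mobius_bound (g 0) (g z) hlt.le (hgb z hz)
  -- derivative bound via Schwarz
  have hd1 : ‖deriv χ 0‖ ≤ 1 := by
    refine le_of_forall_pos_le_add fun ε hε => ?_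
    have hmaps : Set.MapsTo χ (ball (0:ℂ) 1) (ball (χ 0) (1 + ε)) := by
      intro z hz
      rw [hχ0, mem_ball_zero_iff]
      calc ‖χ z‖ ≤ 1 := hχb z hz
        _ < 1 + ε := by linarith
    simpa using Complex.norm_deriv_le_div_of_mapsTo_ball hχd (hmaps.mono_right ball_subset_closedBall) one_pos
  -- compute deriv χ 0
  have hg0 : DifferentiableAt ℂ g 0 :=
    (hg.differentiableAt (isOpen_ball.mem_nhds (mem_ball_self one_pos)))
  have hgd : HasDerivAt g (deriv g 0) 0 := hg0.hasDerivAt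
  have h1 : HasDerivAt (fun z => g z - g 0) (deriv g 0) 0 := hgd.sub_const _
  have h2 : HasDerivAt (fun z => (1:ℂ) - k * g z) (-(k * deriv g 0)) 0 :=
    (hgd.const_mul k).const_sub 1
  have hdiv := h1.div h2 (hden 0 (mem_ball_self one_pos))
  have hχder : deriv χ 0 = deriv g 0 / (1 - k * g 0) := by
    rw [show χ = ((fun z => g z - g 0) / fun z => 1 - k * g z) from rfl, hdiv.deriv]
    field_simp [hden 0 (mem_ball_self one_pos)]
    ring
  rw [hχder, norm_div] at hd1
  have hm : ‖1 - k * g 0‖ = 1 - ‖g 0‖^2 := by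
    have : (1:ℂ) - k * g 0 = ((1 - ‖g 0‖^2 : ℝ) : ℂ) := by
      rw [hk, ← Complex.normSq_eq_conj_mul_self, Complex.normSq_eq_norm_sq]
      push_cast
      ring
    rw [this, Complex.norm_real, Real.norm_eq_abs,
      _root_.abs_of_nonneg (by nlinarith [norm_nonneg (g 0)] : (0:ℝ) ≤ 1 - ‖g 0‖^2)]
  rw [hm] at hd1
  have hpos : (0:ℝ) < 1 - ‖g 0‖^2 := by nlinarith [norm_nonneg (g 0)]
  calc ‖deriv g 0‖ = ‖deriv g 0‖ / (1 - ‖g 0‖^2) * (1 - ‖g 0‖^2) := by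
        field_simp
    _ ≤ 1 * (1 - ‖g 0‖^2) := by
        apply mul_le_mul_of_nonneg_right hd1 hpos.le
    _ = 1 - ‖g 0‖^2 := one_mul _

-- if the sup is attained at the centre, g is constant on the ball; derivs vanish
lemma const_case (g : ℂ → ℂ) (hg : DifferentiableOn ℂ g (ball 0 1))
    (hgb : ∀ z ∈ ball (0:ℂ) 1, ‖g z‖ ≤ 1)
    (h1 : ‖g 0‖ = 1) :
    deriv g 0 = 0 ∧ deriv (deriv g) 0 = 0 := by
  have hmax : IsMaxOn (norm ∘ g) (ball (0:ℂ) 1) 0 := by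
    intro z hz
    simp only [Function.comp_apply, Set.mem_setOf_eq, h1]
    exact hgb z hz
  have heq : Set.EqOn g (Function.const ℂ (g 0)) (ball (0:ℂ) 1) :=
    Complex.eqOn_of_isPreconnected_of_isMaxOn_norm (convex_ball _ _).isPreconnected
      isOpen_ball hg (mem_ball_self one_pos) hmax
  have hder : ∀ z ∈ ball (0:ℂ) 1, deriv g z = 0 := by
    intro z hz
    have hev : g =ᶠ[nhds z] Function.const ℂ (g 0) :=
      Filter.eventuallyEq_of_mem (isOpen_ball.mem_nhds hz) heq
    rw [hev.deriv_eq]; exact deriv_const z _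
  have h0 : deriv g 0 = 0 := hder 0 (mem_ball_self one_pos)
  refine ⟨h0, ?_⟩
  have hev2 : deriv g =ᶠ[nhds (0:ℂ)] Function.const ℂ 0 :=
    Filter.eventuallyEq_of_mem (isOpen_ball.mem_nhds (mem_ball_self one_pos)) hder
  rw [hev2.deriv_eq]; exact deriv_const 0 _

lemma SP' (g : ℂ → ℂ) (hg : DifferentiableOn ℂ g (ball 0 1))
    (hgb : ∀ z ∈ ball (0:ℂ) 1, ‖g z‖ ≤ 1) :
    ‖deriv g 0‖ ≤ 1 - ‖g 0‖^2 := by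
  rcases eq_or_lt_of_le (hgb 0 (mem_ball_self one_pos)) with heq | hlt
  · rw [(const_case g hg hgb heq).1]
    rw [norm_zero, heq]; norm_num
  · exact SP g hg hgb hlt

lemma schur_master (g : ℂ → ℂ) (hg : DifferentiableOn ℂ g (ball 0 1))
    (hgb : ∀ z ∈ ball (0:ℂ) 1, ‖g z‖ ≤ 1) :
    ‖deriv (deriv g) 0 - 3 * g 0 * deriv g 0‖ ≤ 2 := by
  have h0mem : (0:ℂ) ∈ ball (0:ℂ) 1 := mem_ball_self one_pos
  have hle : ‖g 0‖ ≤ 1 := hgb 0 h0mem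
  rcases eq_or_lt_of_le hle with heq | hlt
  · obtain ⟨h1, h2⟩ := const_case g hg hgb heq
    rw [h1, h2]; simp
  set a₀ : ℂ := g 0 with ha₀
  set k : ℂ := (starRingEnd ℂ) a₀ with hk
  have hden : ∀ z ∈ ball (0:ℂ) 1, (1:ℂ) - k * g z ≠ 0 := fun z hz =>
    denom_ne a₀ (g z) hlt (hgb z hz)
  set φ : ℂ → ℂ := fun z => (g z - a₀) / (1 - k * g z) with hφ
  have hφd : DifferentiableOn ℂ φ (ball 0 1) :=
    (hg.sub_const _).div ((differentiableOn_const _).sub ((differentiableOn_const k).mul hg)) hden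
  have hφ0 : φ 0 = 0 := by simp [hφ, ha₀]
  have hφb : ∀ z ∈ ball (0:ℂ) 1, ‖φ z‖ ≤ 1 := by
    intro z hz
    rw [hφ]
    simp only
    rw [norm_div, div_le_one (norm_pos_iff.mpr (hden z hz))]
    exact mobius_bound a₀ (g z) hlt.le (hgb z hz)
  set ψ : ℂ → ℂ := dslope φ 0 with hψ
  have hψd : DifferentiableOn ℂ ψ (ball 0 1) := by
    intro z hz
    rcases eq_or_ne z 0 with rfl | hne
    · obtain ⟨p, hp⟩ := (hφd.analyticOnNhd isOpen_ball) 0 h0mem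
      exact (hp.has_fpower_series_dslope_fslope.analyticAt).differentiableAt.differentiableWithinAt
    · exact (differentiableWithinAt_dslope_of_ne hne).mpr (hφd z hz)
  have hψb : ∀ z ∈ ball (0:ℂ) 1, ‖ψ z‖ ≤ 1 := by
    intro z hz
    refine le_of_forall_pos_le_add fun ε hε => ?_
    have hmaps : Set.MapsTo φ (ball (0:ℂ) 1) (ball (φ 0) (1+ε)) := by
      intro w hw
      rw [hφ0, mem_ball_zero_iff]
      exact lt_of_le_of_lt (hφb w hw) (by linarith)
    simpa using Complex.norm_dslope_le_div_of_mapsTo_ball hφd (hmaps.mono_right ball_subset_closedBall) hz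
  have hga : AnalyticOnNhd ℂ g (ball 0 1) := hg.analyticOnNhd isOpen_ball
  have hψa : AnalyticOnNhd ℂ ψ (ball 0 1) := hψd.analyticOnNhd isOpen_ball
  have hg'd : DifferentiableAt ℂ (deriv g) 0 := (hga.deriv 0 h0mem).differentiableAt
  have hψ'd : DifferentiableAt ℂ (deriv ψ) 0 := (hψa.deriv 0 h0mem).differentiableAt
  have key : ∀ z ∈ ball (0:ℂ) 1, g z + k * (z * ψ z * g z) = a₀ + z * ψ z := by
    intro z hz
    have h1 : z * ψ z = φ z := by
      have h := sub_smul_dslope φ 0 z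
      rw [hφ0, sub_zero, sub_zero, smul_eq_mul] at h
      rw [hψ, h]
    have h2 : φ z * (1 - k * g z) = g z - a₀ := div_mul_cancel₀ _ (hden z hz)
    rw [h1]
    linear_combination -h2
  have key1 : ∀ z ∈ ball (0:ℂ) 1,
      deriv g z + k * ((1 * ψ z + z * deriv ψ z) * g z + z * ψ z * deriv g z)
        = 1 * ψ z + z * deriv ψ z := by
    intro z hz
    have hgz : HasDerivAt g (deriv g z) z :=
      (hg.differentiableAt (isOpen_ball.mem_nhds hz)).hasDerivAt
    have hψz : HasDerivAt ψ (deriv ψ z) z :=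
      (hψd.differentiableAt (isOpen_ball.mem_nhds hz)).hasDerivAt
    have hzψ : HasDerivAt (fun w => w * ψ w) (1 * ψ z + z * deriv ψ z) z :=
      (hasDerivAt_id z).mul hψz
    have hL : HasDerivAt (fun w => g w + k * (w * ψ w * g w))
        (deriv g z + k * ((1 * ψ z + z * deriv ψ z) * g z + z * ψ z * deriv g z)) z :=
      hgz.add ((hzψ.mul hgz).const_mul k)
    have hR : HasDerivAt (fun w => a₀ + w * ψ w) (1 * ψ z + z * deriv ψ z) z :=
      hzψ.const_add a₀
    have heq2 : deriv (fun w => g w + k * (w * ψ w * g w)) z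
        = deriv (fun w => a₀ + w * ψ w) z :=
      Filter.EventuallyEq.deriv_eq
        (Filter.eventuallyEq_of_mem (isOpen_ball.mem_nhds hz) fun w hw => key w hw)
    rw [← hL.deriv, ← hR.deriv]
    exact heq2
  set b₁ : ℂ := ψ 0 with hb₁
  set b₂ : ℂ := deriv ψ 0 with hb₂
  set a₁ : ℂ := deriv g 0 with ha₁
  set A₂ : ℂ := deriv (deriv g) 0 with hA₂
  have I1 : a₁ + k * (b₁ * a₀) = b₁ := by
    have h := key1 0 h0mem
    simpa using h
  have I2 : A₂ + k * (2 * b₂ * a₀ + 2 * b₁ * a₁) = 2 * b₂ := by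
    have hψ0 : HasDerivAt ψ b₂ 0 :=
      (hψd.differentiableAt (isOpen_ball.mem_nhds h0mem)).hasDerivAt
    have hg0 : HasDerivAt g a₁ 0 :=
      (hg.differentiableAt (isOpen_ball.mem_nhds h0mem)).hasDerivAt
    have hψ'0 : HasDerivAt (deriv ψ) (deriv (deriv ψ) 0) 0 := hψ'd.hasDerivAt
    have hg'0 : HasDerivAt (deriv g) A₂ 0 := hg'd.hasDerivAt
    have hzψ' : HasDerivAt (fun w => w * deriv ψ w)
        (1 * deriv ψ 0 + 0 * deriv (deriv ψ) 0) 0 := (hasDerivAt_id 0).mul hψ'0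
    have hS : HasDerivAt (fun w => 1 * ψ w + w * deriv ψ w)
        (1 * b₂ + (1 * deriv ψ 0 + 0 * deriv (deriv ψ) 0)) 0 := (hψ0.const_mul 1).add hzψ'
    have hzψ0 : HasDerivAt (fun w => w * ψ w) (1 * ψ 0 + 0 * b₂) 0 := (hasDerivAt_id 0).mul hψ0
    have hT1 : HasDerivAt (fun w => (1 * ψ w + w * deriv ψ w) * g w)
        ((1 * b₂ + (1 * deriv ψ 0 + 0 * deriv (deriv ψ) 0)) * g 0
          + (1 * ψ 0 + 0 * deriv ψ 0) * a₁) 0 := hS.mul hg0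
    have hT2 : HasDerivAt (fun w => w * ψ w * deriv g w)
        ((1 * ψ 0 + 0 * b₂) * deriv g 0 + 0 * ψ 0 * A₂) 0 := hzψ0.mul hg'0
    have hL2 : HasDerivAt
        (fun w => deriv g w + k * ((1 * ψ w + w * deriv ψ w) * g w + w * ψ w * deriv g w))
        (A₂ + k * (((1 * b₂ + (1 * deriv ψ 0 + 0 * deriv (deriv ψ) 0)) * g 0
          + (1 * ψ 0 + 0 * deriv ψ 0) * a₁) + ((1 * ψ 0 + 0 * b₂) * deriv g 0 + 0 * ψ 0 * A₂))) 0 :=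
      hg'0.add ((hT1.add hT2).const_mul k)
    have heq3 : deriv
        (fun w => deriv g w + k * ((1 * ψ w + w * deriv ψ w) * g w + w * ψ w * deriv g w)) 0
        = deriv (fun w => 1 * ψ w + w * deriv ψ w) 0 :=
      Filter.EventuallyEq.deriv_eq
        (Filter.eventuallyEq_of_mem (isOpen_ball.mem_nhds h0mem) fun w hw => key1 w hw)
    have e2 := heq3
    rw [hL2.deriv, hS.deriv] at e2
    rw [← ha₀, ← hb₁, ← hb₂, ← ha₁] at e2
    linear_combination e2
  have hid : A₂ - 3 * a₀ * a₁ = (1 - k * a₀) * (2 * b₂ - 2 * k * b₁^2 - 3 * a₀ * b₁) :=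
    by linear_combination I2 - (2 * k * b₁ + 3 * a₀) * I1
  have hm : ‖1 - k * a₀‖ = 1 - ‖a₀‖ ^ 2 := by
    have h : (1:ℂ) - k * a₀ = ((1 - ‖a₀‖ ^ 2 : ℝ) : ℂ) := by
      rw [hk, ← Complex.normSq_eq_conj_mul_self, Complex.normSq_eq_norm_sq]
      push_cast
      ring
    rw [h, Complex.norm_real, Real.norm_eq_abs,
      _root_.abs_of_nonneg (by nlinarith [norm_nonneg a₀] : (0:ℝ) ≤ 1 - ‖a₀‖ ^ 2)]
  set t : ℝ := ‖a₀‖ with ht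
  set w : ℝ := ‖b₁‖ with hwd
  have hw1 : w ≤ 1 := hψb 0 h0mem
  have hSPψ : ‖b₂‖ ≤ 1 - w ^ 2 := SP' ψ hψd hψb
  have htri : ‖2 * b₂ - 2 * k * b₁^2 - 3 * a₀ * b₁‖
      ≤ 2 * (1 - w^2) + 2 * t * w^2 + 3 * t * w := by
    calc ‖2 * b₂ - 2 * k * b₁^2 - 3 * a₀ * b₁‖
        ≤ ‖2 * b₂ - 2 * k * b₁^2‖ + ‖3 * a₀ * b₁‖ :=
          norm_sub_le _ _
      _ ≤ ‖2 * b₂‖ + ‖2 * k * b₁^2‖ + ‖3 * a₀ * b₁‖ :=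
          add_le_add_left (norm_sub_le _ _) _
      _ = 2 * ‖b₂‖ + 2 * t * w^2 + 3 * t * w := by
          simp only [norm_mul, Complex.norm_conj, norm_pow, hk, Complex.norm_two, map_ofNat]
          rw [show (‖(3:ℂ)‖ : ℝ) = 3 by norm_num]
      _ ≤ 2 * (1 - w^2) + 2 * t * w^2 + 3 * t * w := by linarith
  calc ‖A₂ - 3 * a₀ * a₁‖
      = (1 - t^2) * ‖2 * b₂ - 2 * k * b₁^2 - 3 * a₀ * b₁‖ := by
        rw [hid, norm_mul, hm]
    _ ≤ (1 - t^2) * (2 * (1 - w^2) + 2 * t * w^2 + 3 * t * w) := by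
        apply mul_le_mul_of_nonneg_left htri
        nlinarith [norm_nonneg a₀]
    _ ≤ 2 := polyineq t w (norm_nonneg a₀) hlt.le (norm_nonneg b₁) hw1

theorem stmt_8 (ω : ℂ → ℂ) (c : ℕ → ℂ)
    (hd : DifferentiableOn ℂ ω (ball 0 1))
    (h0 : ω 0 = 0)
    (hb : ∀ z ∈ ball (0:ℂ) 1, ‖deriv ω z‖ ≤ 1)
    (hc : ∀ z ∈ ball (0:ℂ) 1, HasSum (fun n : ℕ => c (n + 1) * z ^ (n + 1)) (ω z)) :
    ‖c 3 - c 1 * c 2‖ ≤ 1/3 := by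
  classical
  set a : ℕ → ℂ := fun n => if n = 0 then 0 else c n with ha
  set p : FormalMultilinearSeries ℂ ℂ ℂ := FormalMultilinearSeries.ofScalars ℂ a with hp
  have hsum : ∀ z ∈ ball (0:ℂ) 1, HasSum (fun n => a n * z ^ n) (ω z) := by
    intro z hz
    have h2 : HasSum (fun n : ℕ => a (n+1) * z^(n+1)) (ω z) := by
      have h := hc z hz
      have he : (fun n : ℕ => a (n+1) * z^(n+1)) = fun n : ℕ => c (n+1) * z^(n+1) := by
        funext n; simp [ha]
      rw [he]; exact h
    have h3 : HasSum (fun n : ℕ => a (n+1) * z^(n+1))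
        (ω z - ∑ i ∈ Finset.range 1, a i * z ^ i) := by
      simpa [ha] using h2
    exact (hasSum_nat_add_iff' 1).mp h3
  have hrad : 1 ≤ p.radius := by
    refine ENNReal.le_of_forall_nnreal_lt fun r hr => ?_
    have hr1 : (r : ℝ) < 1 := by exact_mod_cast hr
    have hz : ((r:ℝ) : ℂ) ∈ ball (0:ℂ) 1 := by
      rw [mem_ball_zero_iff]
      simpa [Complex.norm_real, Real.norm_eq_abs, _root_.abs_of_nonneg r.coe_nonneg] using hr1
    have hs := (hsum _ hz).summable
    apply p.le_radius_of_tendsto (l := 0)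
    have hnorm : (fun n => ‖p n‖ * (r:ℝ)^n) = fun n => ‖a n * ((r:ℝ):ℂ)^n‖ := by
      funext n
      rw [hp, FormalMultilinearSeries.ofScalars_norm]
      simp [norm_mul, norm_pow, Complex.norm_real, Real.norm_eq_abs,
        _root_.abs_of_nonneg r.coe_nonneg]
    rw [hnorm]
    simpa using hs.tendsto_atTop_zero.norm
  have hps : HasFPowerSeriesOnBall ω p 0 1 :=
    { r_le := hrad
      r_pos := one_pos
      hasSum := by
        intro y hy
        have hy' : y ∈ ball (0:ℂ) 1 := by
          rw [mem_ball_zero_iff]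
          have := mem_emetric_ball_zero_iff.mp hy
          rw [enorm_eq_nnnorm] at this
          exact_mod_cast this
        have h := hsum y hy'
        rw [zero_add]
        have e : (fun n => p n (fun _ => y)) = fun n => a n * y ^ n := by
          funext n
          rw [hp, FormalMultilinearSeries.ofScalars_apply_eq, smul_eq_mul]
        rw [e]; exact h }
  have hder : ∀ n : ℕ, iteratedDeriv n ω 0 = (Nat.factorial n : ℂ) * a n := by
    intro n
    have h := hps.factorial_smul (1 : ℂ) n
    rw [hp, FormalMultilinearSeries.ofScalars_apply_eq] at h
    rw [iteratedDeriv, ← h]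
    simp [smul_eq_mul]
  have h1 : deriv ω 0 = c 1 := by
    have h := hder 1
    rw [← iteratedDeriv_one]
    rw [h]; simp [ha]
  have h2 : deriv (deriv ω) 0 = 2 * c 2 := by
    have h := hder 2
    rw [iteratedDeriv_succ, iteratedDeriv_one] at h
    rw [h]
    norm_num [ha, Nat.factorial]
  have h3 : deriv (deriv (deriv ω)) 0 = 6 * c 3 := by
    have h := hder 3
    rw [iteratedDeriv_succ, iteratedDeriv_succ, iteratedDeriv_one] at h
    rw [h]
    norm_num [ha, Nat.factorial]
  have hgd : DifferentiableOn ℂ (deriv ω) (ball 0 1) :=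
    ((hd.analyticOnNhd isOpen_ball).deriv).differentiableOn
  have hmaster := schur_master (deriv ω) hgd hb
  rw [h1, h2, h3] at hmaster
  have hrw : (6:ℂ) * c 3 - 3 * c 1 * (2 * c 2) = 6 * (c 3 - c 1 * c 2) := by ring
  rw [hrw, norm_mul] at hmaster
  have h6 : ‖(6:ℂ)‖ = 6 := by norm_num
  rw [h6] at hmaster
  linarith
end

section
/- Let ω ∈ 𝓑'₀ have power series expansion ω(z) = c₁z + c₂z² + c₃z³ + ⋯ on 𝔻, let μ ∈ ℂ, and suppose 1/(1 + (3/4)|μ|) ≤ |c₁| ≤ 1. Then |c₃ − μc₁c₂| ≤ (1/3 + (1/2)|μ|)·|c₁|·(1 − |c₁|²). -/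
open Complex Metric

open Set Filter ComplexConjugate Topology
open scoped NNReal ENNReal

noncomputable def Complex.abs : AbsoluteValue ℂ ℝ := NormedField.toAbsoluteValue ℂ

lemma Complex.norm_eq_abs (z : ℂ) : ‖z‖ = Complex.abs z := rfl

lemma Complex.abs_apply (z : ℂ) : Complex.abs z = Real.sqrt (normSq z) := Complex.norm_def z

lemma Complex.sq_abs (z : ℂ) : Complex.abs z ^ 2 = normSq z := Complex.sq_norm z

lemma Complex.abs_conj (z : ℂ) : Complex.abs (conj z) = Complex.abs z := Complex.norm_conj z

lemma Complex.abs_ofReal (r : ℝ) : Complex.abs (r : ℂ) = |r| := by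
  rw [← Complex.norm_eq_abs, Complex.norm_real, Real.norm_eq_abs]

lemma Complex.abs_two : Complex.abs 2 = 2 := Complex.norm_two

lemma Complex.continuous_abs : Continuous Complex.abs := continuous_norm

lemma Complex.abs_ofNat (n : ℕ) [n.AtLeastTwo] : Complex.abs (no_index (OfNat.ofNat n)) = OfNat.ofNat n := by
  simp only [← Complex.norm_eq_abs]; norm_num

attribute [simp] Complex.abs_ofNat Complex.norm_eq_abs Complex.abs_conj Complex.abs_ofReal Complex.abs_two

lemma one_sub_ne {a w : ℂ} (h : Complex.abs a * Complex.abs w < 1) : (1 : ℂ) - conj a * w ≠ 0 := by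
  intro hz
  have : conj a * w = 1 := by linear_combination -hz
  have := congrArg Complex.abs this
  rw [map_mul, map_one, abs_conj] at this
  linarith

lemma mobius_abs_le {a w : ℂ} (ha : Complex.abs a ≤ 1) (hw : Complex.abs w ≤ 1) :
    Complex.abs (w - a) ≤ Complex.abs (1 - conj a * w) := by
  have h1 : normSq a ≤ 1 := by rw [← Complex.sq_abs]; nlinarith [Complex.abs.nonneg a]
  have h2 : normSq w ≤ 1 := by rw [← Complex.sq_abs]; nlinarith [Complex.abs.nonneg w]
  rw [Complex.abs_apply, Complex.abs_apply]
  apply Real.sqrt_le_sqrt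
  simp only [Complex.normSq_apply, Complex.sub_re, Complex.sub_im, Complex.mul_re, Complex.mul_im,
    Complex.conj_re, Complex.conj_im, Complex.one_re, Complex.one_im, Complex.normSq_apply] at *
  nlinarith [mul_nonneg (sub_nonneg.2 h1) (sub_nonneg.2 h2)]

lemma mobius_abs_lt {a w : ℂ} (ha : Complex.abs a < 1) (hw : Complex.abs w < 1) :
    Complex.abs (w - a) < Complex.abs (1 - conj a * w) := by
  have h1 : normSq a < 1 := by rw [← Complex.sq_abs]; nlinarith [Complex.abs.nonneg a]
  have h2 : normSq w < 1 := by rw [← Complex.sq_abs]; nlinarith [Complex.abs.nonneg w]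
  rw [Complex.abs_apply, Complex.abs_apply]
  apply Real.sqrt_lt_sqrt (normSq_nonneg _)
  simp only [Complex.normSq_apply, Complex.sub_re, Complex.sub_im, Complex.mul_re, Complex.mul_im,
    Complex.conj_re, Complex.conj_im, Complex.one_re, Complex.one_im, Complex.normSq_apply] at *
  nlinarith [mul_pos (sub_pos.2 h1) (sub_pos.2 h2)]

lemma cabs_sub_le (A B : ℂ) : Complex.abs (A - B) ≤ Complex.abs A + Complex.abs B := by
  simpa [← Complex.norm_eq_abs] using norm_sub_le A B

lemma cabs_le_add (A B : ℂ) : Complex.abs A ≤ Complex.abs (A + B) + Complex.abs B := by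
  simpa using cabs_sub_le (A + B) B

lemma schwarz_pick_zero (F : ℂ → ℂ) (hd : DifferentiableOn ℂ F (ball 0 1))
    (hb : ∀ z ∈ ball (0:ℂ) 1, Complex.abs (F z) ≤ 1) :
    Complex.abs (deriv F 0) ≤ 1 - Complex.abs (F 0) ^ 2 := by
  have h0m : (0:ℂ) ∈ ball (0:ℂ) 1 := by simp
  rcases eq_or_lt_of_le (hb 0 h0m) with heq | hlt
  · -- |F 0| = 1 : maximum modulus, F constant
    have hm : IsMaxOn (norm ∘ F) (ball (0:ℂ) 1) 0 := by
      intro z hz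
      simp only [Function.comp_apply, norm_eq_abs, Set.mem_setOf_eq]
      exact (hb z hz).trans heq.ge
    have hEq := Complex.eqOn_of_isPreconnected_of_isMaxOn_norm
      (convex_ball (0:ℂ) 1).isPreconnected isOpen_ball hd h0m hm
    have hev : F =ᶠ[𝓝 (0:ℂ)] (fun _ => F 0) :=
      Filter.eventuallyEq_of_mem (isOpen_ball.mem_nhds h0m) hEq
    have : deriv F 0 = 0 := by rw [hev.deriv_eq]; exact deriv_const _ _
    rw [this, map_zero, heq]
    norm_num
  · -- |F 0| < 1
    set a := F 0 with ha
    set k : ℂ → ℂ := fun z => (F z - a) * (1 - conj a * F z)⁻¹ with hk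
    have hden : ∀ z ∈ ball (0:ℂ) 1, (1:ℂ) - conj a * F z ≠ 0 := by
      intro z hz
      exact one_sub_ne (by nlinarith [hb z hz, Complex.abs.nonneg a, Complex.abs.nonneg (F z)])
    have hdk : DifferentiableOn ℂ k (ball 0 1) := by
      apply (hd.sub_const a).mul
      exact ((differentiableOn_const 1).sub ((differentiableOn_const (conj a)).mul hd)).inv hden
    have hk0 : k 0 = 0 := by simp [hk, ← ha]
    have hkb : ∀ z ∈ ball (0:ℂ) 1, Complex.abs (k z) ≤ 1 := by
      intro z hz
      have hd0 : Complex.abs (1 - conj a * F z) ≠ 0 := by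
        rw [ne_eq, map_eq_zero]
        exact hden z hz
      rw [hk]
      simp only [map_mul, map_inv₀]
      rw [mul_inv_le_iff₀ (lt_of_le_of_ne (Complex.abs.nonneg _) (Ne.symm hd0)), one_mul]
      exact mobius_abs_le hlt.le (hb z hz)
    have hk1 : Complex.abs (deriv k 0) ≤ 1 := by
      have key : ∀ ε : ℝ, 0 < ε → Complex.abs (deriv k 0) ≤ 1 + ε := by
        intro ε hε
        have hmaps : MapsTo k (ball (0:ℂ) 1) (ball (k 0) (1 + ε)) := by
          intro z hz
          rw [hk0, mem_ball, dist_zero_right]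
          calc ‖k z‖ ≤ 1 := hkb z hz
          _ < 1 + ε := by linarith
        have := Complex.norm_deriv_le_div_of_mapsTo_ball hdk (hmaps.mono_right ball_subset_closedBall) one_pos
        simpa using this
      linarith [le_of_forall_pos_le_add key]
    -- compute deriv k 0
    have hFd : DifferentiableAt ℂ F 0 := hd.differentiableAt (isOpen_ball.mem_nhds h0m)
    have hkd : DifferentiableAt ℂ k 0 := hdk.differentiableAt (isOpen_ball.mem_nhds h0m)
    have hev : (fun z => k z * (1 - conj a * F z)) =ᶠ[𝓝 (0:ℂ)] (fun z => F z - a) := by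
      apply Filter.eventuallyEq_of_mem (isOpen_ball.mem_nhds h0m)
      intro z hz
      simp only [hk]
      rw [mul_assoc, inv_mul_cancel₀ (hden z hz), mul_one]
    have H1 : HasDerivAt (fun z => k z * (1 - conj a * F z))
        (deriv k 0 * (1 - conj a * F 0) + k 0 * (0 - conj a * deriv F 0)) 0 :=
      hkd.hasDerivAt.mul ((hasDerivAt_const 0 (1:ℂ)).sub (hFd.hasDerivAt.const_mul (conj a)))
    have H2 : HasDerivAt (fun z => F z - a) (deriv F 0) 0 := hFd.hasDerivAt.sub_const a
    have heqd : deriv F 0 = deriv k 0 * (1 - conj a * a) := by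
      have := (H1.congr_of_eventuallyEq hev.symm).unique H2
      rw [← this, hk0, ← ha]
      ring
    have habs : Complex.abs (1 - conj a * a) = 1 - Complex.abs a ^ 2 := by
      rw [mul_comm, Complex.mul_conj]
      rw [← Complex.ofReal_one, ← Complex.ofReal_sub, Complex.abs_ofReal]
      rw [_root_.abs_of_nonneg (by nlinarith [Complex.sq_abs a, Complex.abs.nonneg a] : (0:ℝ) ≤ 1 - normSq a), Complex.sq_abs]
    calc Complex.abs (deriv F 0) = Complex.abs (deriv k 0) * (1 - Complex.abs a ^ 2) := by
          rw [heqd, map_mul, habs]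
      _ ≤ 1 * (1 - Complex.abs a ^ 2) := by
          apply mul_le_mul_of_nonneg_right hk1
          nlinarith [Complex.abs.nonneg a]
      _ = 1 - Complex.abs (F 0) ^ 2 := by rw [one_mul, ← ha]

lemma schur_second (F : ℂ → ℂ) (r : ℝ) (hr : r < 1)
    (hd : DifferentiableOn ℂ F (ball 0 1))
    (hb : ∀ z ∈ ball (0:ℂ) 1, Complex.abs (F z) ≤ r) :
    Complex.abs (iteratedDeriv 2 F 0 * ((1 - Complex.abs (F 0)^2 : ℝ) : ℂ)
        + 2 * conj (F 0) * (deriv F 0)^2)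
      ≤ 2 * ((1 - Complex.abs (F 0)^2)^2 - Complex.abs (deriv F 0)^2) := by
  have h0m : (0:ℂ) ∈ ball (0:ℂ) 1 := by simp
  set a := F 0 with ha
  have hlt : Complex.abs a < 1 := lt_of_le_of_lt (hb 0 h0m) hr
  have hden : ∀ z ∈ ball (0:ℂ) 1, (1:ℂ) - conj a * F z ≠ 0 := by
    intro z hz
    have hr0 : (0:ℝ) ≤ r := (Complex.abs.nonneg (F 0)).trans (hb 0 h0m)
    apply one_sub_ne
    nlinarith [hb z hz, Complex.abs.nonneg a, Complex.abs.nonneg (F z)]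
  set g : ℂ → ℂ := fun z => (F z - a) * (1 - conj a * F z)⁻¹ with hgdef
  have hdg : DifferentiableOn ℂ g (ball 0 1) := by
    apply (hd.sub_const a).mul
    exact ((differentiableOn_const 1).sub ((differentiableOn_const (conj a)).mul hd)).inv hden
  have hg0 : g 0 = 0 := by simp [hgdef, ← ha]
  have hgb : ∀ z ∈ ball (0:ℂ) 1, Complex.abs (g z) < 1 := by
    intro z hz
    have hd0 : (0:ℝ) < Complex.abs (1 - conj a * F z) := by
      rcases (Complex.abs.nonneg (1 - conj a * F z)).lt_or_eq with h | h
      · exact h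
      · exact absurd (by rwa [eq_comm, map_eq_zero] at h) (hden z hz)
    rw [hgdef]
    simp only [map_mul, map_inv₀]
    rw [mul_inv_lt_iff₀ hd0, one_mul]
    exact mobius_abs_lt hlt (lt_of_le_of_lt (hb z hz) hr)
  have hmaps : MapsTo g (ball (0:ℂ) 1) (ball (g 0) 1) := by
    rw [hg0]
    intro z hz
    rw [mem_ball, dist_zero_right]
    exact hgb z hz
  set h : ℂ → ℂ := dslope g 0 with hhdef
  have hdh : DifferentiableOn ℂ h (ball 0 1) :=
    (Complex.differentiableOn_dslope (isOpen_ball.mem_nhds h0m)).mpr hdg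
  have hhb : ∀ z ∈ ball (0:ℂ) 1, Complex.abs (h z) ≤ 1 := by
    intro z hz
    have := Complex.norm_dslope_le_div_of_mapsTo_ball hdg (hmaps.mono_right ball_subset_closedBall) hz
    simpa using this
  have hL := schwarz_pick_zero h hdh hhb
  have hh0 : h 0 = deriv g 0 := dslope_same g 0
  -- the auxiliary function u
  set u : ℂ → ℂ := fun z => h z * (1 - conj a * F z) with hudef
  have hdu : DifferentiableOn ℂ u (ball 0 1) :=
    hdh.mul (((differentiableOn_const 1).sub ((differentiableOn_const (conj a)).mul hd)))
  have hu_eq : ∀ z ∈ ball (0:ℂ) 1, z * u z = F z - a := by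
    intro z hz
    have hzh : z * h z = g z := by
      have := sub_smul_dslope g 0 z
      rw [sub_zero, hg0, sub_zero, smul_eq_mul] at this
      rw [hhdef, this]
    calc z * u z = (z * h z) * (1 - conj a * F z) := by rw [hudef]; ring
      _ = (F z - a) * ((1 - conj a * F z)⁻¹ * (1 - conj a * F z)) := by
          rw [hzh, hgdef]; ring
      _ = F z - a := by rw [inv_mul_cancel₀ (hden z hz), mul_one]
  have hev : (fun z => z * u z) =ᶠ[𝓝 (0:ℂ)] (fun z => F z - a) :=
    Filter.eventuallyEq_of_mem (isOpen_ball.mem_nhds h0m) hu_eq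
  -- analyticity to differentiate deriv u
  have hu_an : AnalyticOnNhd ℂ (deriv u) (ball 0 1) := (hdu.analyticOnNhd isOpen_ball).deriv
  have hdu0 : DifferentiableAt ℂ u 0 := hdu.differentiableAt (isOpen_ball.mem_nhds h0m)
  have hdu'0 : DifferentiableAt ℂ (deriv u) 0 := (hu_an 0 h0m).differentiableAt
  have hFd : DifferentiableAt ℂ F 0 := hd.differentiableAt (isOpen_ball.mem_nhds h0m)
  have hhd0 : DifferentiableAt ℂ h 0 := hdh.differentiableAt (isOpen_ball.mem_nhds h0m)
  -- first derivative identity : u 0 = deriv F 0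
  have hu0 : u 0 = deriv F 0 := by
    have Hl : HasDerivAt (fun z => z * u z) (1 * u 0 + 0 * deriv u 0) 0 :=
      (hasDerivAt_id 0).mul hdu0.hasDerivAt
    have Hr : HasDerivAt (fun z => F z - a) (deriv F 0) 0 := hFd.hasDerivAt.sub_const a
    have := (Hl.congr_of_eventuallyEq hev.symm).unique Hr
    rw [← this]; ring
  -- second derivative identity : iteratedDeriv 2 F 0 = 2 * deriv u 0
  have hw : iteratedDeriv 2 F 0 = 2 * deriv u 0 := by
    have hderiv_zu : ∀ z ∈ ball (0:ℂ) 1,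
        deriv (fun y => y * u y) z = u z + z * deriv u z := by
      intro z hz
      have : HasDerivAt (fun y => y * u y) (1 * u z + z * deriv u z) z :=
        (hasDerivAt_id z).mul (hdu.differentiableAt (isOpen_ball.mem_nhds hz)).hasDerivAt
      rw [this.deriv]; ring
    have hev2 : deriv (fun z => z * u z) =ᶠ[𝓝 (0:ℂ)] (fun z => u z + z * deriv u z) :=
      Filter.eventuallyEq_of_mem (isOpen_ball.mem_nhds h0m) hderiv_zu
    have hev3 : (fun z => u z + z * deriv u z) =ᶠ[𝓝 (0:ℂ)] deriv F := by
      refine (hev2.symm.trans (hev.deriv)).trans ?_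
      apply Filter.EventuallyEq.of_eq
      funext z
      exact deriv_sub_const a
    have Hw : HasDerivAt (fun z => u z + z * deriv u z)
        (deriv u 0 + (1 * deriv u 0 + 0 * deriv (deriv u) 0)) 0 :=
      hdu0.hasDerivAt.add ((hasDerivAt_id 0).mul hdu'0.hasDerivAt)
    have : deriv (deriv F) 0 = deriv u 0 + (1 * deriv u 0 + 0 * deriv (deriv u) 0) := by
      rw [← hev3.deriv_eq]
      exact Hw.deriv
    rw [iteratedDeriv_succ, iteratedDeriv_one, this]
    ring
  -- compute deriv u 0
  have hderu : deriv u 0 = deriv h 0 * (1 - conj a * a) + h 0 * (0 - conj a * deriv F 0) := by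
    have : HasDerivAt u (deriv h 0 * (1 - conj a * F 0) + h 0 * (0 - conj a * deriv F 0)) 0 :=
      hhd0.hasDerivAt.mul ((hasDerivAt_const 0 (1:ℂ)).sub (hFd.hasDerivAt.const_mul (conj a)))
    rw [this.deriv, ← ha]
  -- abbreviations
  set β : ℂ := 1 - conj a * a with hβdef
  have hβ : β = ((1 - Complex.abs a ^ 2 : ℝ) : ℂ) := by
    rw [hβdef, mul_comm, Complex.mul_conj, ← Complex.sq_abs]
    push_cast
    ring
  set η := deriv h 0 with hη
  set e := h 0 with he
  set b₁ := deriv F 0 with hb₁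
  have E1 : b₁ = e * β := by
    rw [← hu0]
  have E2 : iteratedDeriv 2 F 0 = 2 * (η * β - e * (conj a * b₁)) := by
    rw [hw, hderu, hβdef]; ring
  have hinner : iteratedDeriv 2 F 0 * ((1 - Complex.abs (F 0)^2 : ℝ) : ℂ)
      + 2 * conj (F 0) * (deriv F 0)^2 = 2 * η * β^2 := by
    rw [← ha, ← hβ, ← hb₁, E2, E1]
    ring
  rw [hinner]
  have habsβ : Complex.abs β = 1 - Complex.abs a ^ 2 := by
    rw [hβ, Complex.abs_ofReal, _root_.abs_of_nonneg]
    nlinarith [Complex.abs.nonneg a]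
  have habsb₁ : Complex.abs b₁ = Complex.abs e * (1 - Complex.abs a ^ 2) := by
    rw [E1, map_mul, habsβ]
  rw [habsb₁]
  have h1 : Complex.abs (2 * η * β^2) = 2 * Complex.abs η * (1 - Complex.abs a ^ 2)^2 := by
    rw [map_mul, map_mul, map_pow, habsβ]
    simp [Complex.abs_two]
  rw [h1]
  have hs : (0:ℝ) ≤ 1 - Complex.abs a ^ 2 := by nlinarith [Complex.abs.nonneg a]
  nlinarith [Complex.abs.nonneg η, Complex.abs.nonneg e, sq_nonneg (1 - Complex.abs a ^2),
    mul_le_mul_of_nonneg_right hL (mul_self_nonneg (1 - Complex.abs a ^ 2))]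

set_option maxHeartbeats 1600000 in
theorem stmt_10 (ω : ℂ → ℂ) (c : ℕ → ℂ) (μ : ℂ)
    (hd : DifferentiableOn ℂ ω (ball 0 1))
    (h0 : ω 0 = 0)
    (hb : ∀ z ∈ ball (0:ℂ) 1, ‖deriv ω z‖ ≤ 1)
    (hc : ∀ z ∈ ball (0:ℂ) 1, HasSum (fun n : ℕ => c (n + 1) * z ^ (n + 1)) (ω z))
    (h1 : 1 / (1 + (3/4) * ‖μ‖) ≤ ‖c 1‖)
    (h2 : ‖c 1‖ ≤ 1) :
    ‖c 3 - μ * c 1 * c 2‖ ≤ (1/3 + (1/2) * ‖μ‖) * ‖c 1‖ * (1 - ‖c 1‖^2) := by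
  simp only [Complex.norm_eq_abs] at hb h1 h2 ⊢
  classical
  have coeffs : deriv ω 0 = c 1 ∧ iteratedDeriv 2 ω 0 = 2 * c 2 ∧ iteratedDeriv 3 ω 0 = 6 * c 3 := by
    set d : ℕ → ℂ := fun n => if n = 0 then 0 else c n with hddef
    have hd0 : d 0 = 0 := by simp [hddef]
    have hdn : ∀ n, d (n+1) = c (n+1) := fun n => by simp [hddef]
    set p := FormalMultilinearSeries.ofScalars ℂ d with hpdef
    have hsum : ∀ y : ℂ, y ∈ ball (0:ℂ) 1 → HasSum (fun n => d n * y ^ n) (ω y) := by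
      intro y hy
      have h1 : HasSum (fun n => d (n+1) * y ^ (n+1)) (ω y) := by
        simpa [hdn] using hc y hy
      have h2 := (hasSum_nat_add_iff (f := fun n => d n * y ^ n) 1).mp h1
      simpa [hd0] using h2
    have hps : HasFPowerSeriesOnBall ω p 0 (1/2) := by
      refine ⟨?_, by norm_num, ?_⟩
      · have hsummable : Summable (fun n => d n * ((1:ℂ)/2) ^ n) :=
          (hsum (1/2) (by norm_num [mem_ball])).summable
        have hnorm : Summable (fun n => ‖d n * ((1:ℂ)/2)^n‖) := summable_norm_iff.mpr hsummable
        have hS : Summable (fun n => ‖p n‖ * ((1/2 : ℝ≥0) : ℝ) ^ n) := by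
          refine hnorm.congr fun n => ?_
          rw [norm_mul, norm_pow, hpdef, FormalMultilinearSeries.ofScalars_norm]
          norm_num
        have := FormalMultilinearSeries.le_radius_of_summable p hS
        convert this using 1
        norm_num
      · intro y hy
        have hy' : y ∈ ball (0:ℂ) 1 := by
          rw [EMetric.mem_ball, edist_zero_right] at hy
          rw [mem_ball, dist_zero_right]
          have h3 : (‖y‖₊ : ℝ≥0∞) < ((1/2 : ℝ≥0) : ℝ≥0∞) := by
            convert hy using 1 <;> norm_num [enorm_eq_nnnorm, ENNReal.coe_div]
          rw [ENNReal.coe_lt_coe] at h3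
          calc ‖y‖ ≤ ((1/2 : ℝ≥0) : ℝ) := h3.le
            _ < 1 := by norm_num
        have := hsum y hy'
        simp only [zero_add]
        refine HasSum.congr_fun this fun n => ?_
        rw [hpdef, FormalMultilinearSeries.ofScalars_apply_eq, smul_eq_mul]
    have hfact : ∀ n, iteratedDeriv n ω 0 = (n.factorial : ℂ) * d n := by
      intro n
      have h1 := hps.factorial_smul (y := (1:ℂ)) n
      rw [iteratedDeriv_eq_iteratedFDeriv, ← h1]
      have : p n (fun _ => (1:ℂ)) = d n := by
        rw [hpdef, FormalMultilinearSeries.ofScalars_apply_eq]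
        simp
      rw [this, nsmul_eq_mul]
    refine ⟨?_, ?_, ?_⟩
    · rw [← iteratedDeriv_one, hfact 1]
      simp [hdn]
    · rw [hfact 2, hdn 1]
      norm_num [Nat.factorial]
    · rw [hfact 3, hdn 2]
      norm_num [Nat.factorial]
  obtain ⟨e1, e2, e3⟩ := coeffs
  have h0m : (0:ℂ) ∈ ball (0:ℂ) 1 := by simp
  set f := deriv ω with hfdef
  have hfan : AnalyticOnNhd ℂ f (ball 0 1) := (hd.analyticOnNhd isOpen_ball).deriv
  have hfd : DifferentiableOn ℂ f (ball 0 1) := hfan.differentiableOn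
  have hf0 : f 0 = c 1 := e1
  have hi2 : iteratedDeriv 2 ω = deriv (deriv ω) := by
    rw [iteratedDeriv_succ, iteratedDeriv_one]
  have hi2f : iteratedDeriv 2 f = deriv (deriv f) := by
    rw [iteratedDeriv_succ, iteratedDeriv_one]
  have hi3 : iteratedDeriv 3 ω = deriv (deriv (deriv ω)) := by
    rw [iteratedDeriv_succ, iteratedDeriv_succ, iteratedDeriv_one]
  have hf1 : deriv f 0 = 2 * c 2 := by
    rw [hfdef, ← hi2]
    exact e2
  have hf2 : iteratedDeriv 2 f 0 = 6 * c 3 := by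
    rw [hi2f, hfdef, ← hi3]
    exact e3
  set t := Complex.abs (c 1) with htdef
  set x := Complex.abs (c 2) with hxdef
  set m := Complex.abs μ with hmdef
  have htpos : 0 < t := lt_of_lt_of_le (by positivity) h1
  have hm0 : (0:ℝ) ≤ m := Complex.abs.nonneg μ
  have hx0 : (0:ℝ) ≤ x := Complex.abs.nonneg (c 2)
  have hy0 : (0:ℝ) ≤ Complex.abs (c 3) := Complex.abs.nonneg (c 3)
  have h1' : 1 ≤ t * (1 + 3/4 * m) := by
    rw [div_le_iff₀ (by positivity)] at h1
    linarith [h1]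
  -- Schwarz-Pick : 2x ≤ 1 - t^2
  have hSP : 2 * x ≤ 1 - t^2 := by
    have := schwarz_pick_zero f hfd hb
    rw [hf1, hf0] at this
    calc 2 * x = Complex.abs (2 * c 2) := by
          rw [map_mul, Complex.abs_two]
      _ ≤ 1 - t^2 := this
  rcases eq_or_lt_of_le h2 with heq | hlt
  · -- |c 1| = 1 : f is constant
    have hm : IsMaxOn (norm ∘ f) (ball (0:ℂ) 1) 0 := by
      intro z hz
      simp only [Function.comp_apply, norm_eq_abs, Set.mem_setOf_eq, hf0]
      rw [← htdef, heq]
      exact hb z hz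
    have hEq := Complex.eqOn_of_isPreconnected_of_isMaxOn_norm
      (convex_ball (0:ℂ) 1).isPreconnected isOpen_ball hfd h0m hm
    have hderiv0 : ∀ z ∈ ball (0:ℂ) 1, deriv f z = 0 := by
      intro z hz
      have hev : f =ᶠ[𝓝 z] (fun _ => f 0) :=
        Filter.eventuallyEq_of_mem (isOpen_ball.mem_nhds hz) hEq
      rw [hev.deriv_eq]
      exact deriv_const _ _
    have hc2 : c 2 = 0 := by
      have := hderiv0 0 h0m
      rw [hf1] at this
      exact (mul_eq_zero.mp this).resolve_left two_ne_zero
    have hc3 : c 3 = 0 := by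
      have hev : deriv f =ᶠ[𝓝 (0:ℂ)] (fun _ => (0:ℂ)) :=
        Filter.eventuallyEq_of_mem (isOpen_ball.mem_nhds h0m) hderiv0
      have : iteratedDeriv 2 f 0 = 0 := by
        rw [iteratedDeriv_succ, iteratedDeriv_one, hev.deriv_eq, deriv_const]
      rw [hf2] at this
      exact (mul_eq_zero.mp this).resolve_left (by norm_num)
    rw [hc2, hc3]
    simp only [mul_zero, sub_zero, map_zero]
    rw [heq]
    norm_num
  · -- |c 1| < 1
    -- scaled inequality
    have key : ∀ r : ℝ, r ∈ Ioo (0:ℝ) 1 →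
        Complex.abs ((r:ℂ) * (6 * c 3) * ((1 - (r*t)^2 : ℝ) : ℂ)
            + 2 * ((r:ℂ) * conj (c 1)) * ((r:ℂ) * (2 * c 2))^2)
          ≤ 2 * ((1 - (r*t)^2)^2 - (r*(2*x))^2) := by
      intro r hr
      set F : ℂ → ℂ := fun z => (r:ℂ) * f z with hFdef
      have hFd : DifferentiableOn ℂ F (ball 0 1) := hfd.const_smul (r:ℂ)
      have hFb : ∀ z ∈ ball (0:ℂ) 1, Complex.abs (F z) ≤ r := by
        intro z hz
        rw [hFdef]
        simp only [map_mul, Complex.abs_ofReal, _root_.abs_of_pos hr.1]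
        nlinarith [hb z hz, hr.1]
      have hF0 : F 0 = (r:ℂ) * c 1 := by rw [hFdef]; simp [hf0]
      have habsF0 : Complex.abs (F 0) = r * t := by
        rw [hF0, map_mul, Complex.abs_ofReal, _root_.abs_of_pos hr.1]
      have hF1 : deriv F 0 = (r:ℂ) * (2 * c 2) := by
        rw [hFdef, deriv_const_mul _ (hfd.differentiableAt (isOpen_ball.mem_nhds h0m)), hf1]
      have hF2 : iteratedDeriv 2 F 0 = (r:ℂ) * (6 * c 3) := by
        have hev : deriv F =ᶠ[𝓝 (0:ℂ)] (fun z => (r:ℂ) * deriv f z) := by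
          apply Filter.eventuallyEq_of_mem (isOpen_ball.mem_nhds h0m)
          intro z hz
          rw [hFdef, deriv_const_mul _ (hfd.differentiableAt (isOpen_ball.mem_nhds hz))]
        have hi2F : iteratedDeriv 2 F = deriv (deriv F) := by
          rw [iteratedDeriv_succ, iteratedDeriv_one]
        rw [hi2F, hev.deriv_eq, deriv_const_mul _ ((hfan.deriv 0 h0m).differentiableAt)]
        have : deriv (deriv f) 0 = 6 * c 3 := by rw [← hi2f]; exact hf2
        rw [this]
      have M := schur_second F r hr.2 hFd hFb
      have hconj : (starRingEnd ℂ) ((r:ℂ) * c 1) = (r:ℂ) * conj (c 1) := by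
        rw [map_mul, Complex.conj_ofReal]
      have habs2 : Complex.abs ((r:ℂ) * (2 * c 2)) = r * (2 * x) := by
        rw [map_mul, map_mul, Complex.abs_ofReal, _root_.abs_of_pos hr.1, Complex.abs_two]
      rw [habsF0, hF2, hF1, hF0, hconj, habs2] at M
      exact M
    -- pass to the limit r → 1⁻
    have hmem : (1:ℝ) ∈ closure (Ioo (0:ℝ) 1) := by
      rw [closure_Ioo (by norm_num : (0:ℝ) ≠ 1)]
      simp
    haveI hNB : (𝓝[Ioo (0:ℝ) 1] (1:ℝ)).NeBot := mem_closure_iff_nhdsWithin_neBot.mp hmem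
    set Φ : ℝ → ℝ := fun r => Complex.abs ((r:ℂ) * (6 * c 3) * ((1 - (r*t)^2 : ℝ) : ℂ)
        + 2 * ((r:ℂ) * conj (c 1)) * ((r:ℂ) * (2 * c 2))^2) with hΦdef
    set Ψ : ℝ → ℝ := fun r => 2 * ((1 - (r*t)^2)^2 - (r*(2*x))^2) with hΨdef
    have hΦc : Continuous Φ := by
      apply Complex.continuous_abs.comp
      fun_prop
    have hΨc : Continuous Ψ := by fun_prop
    have hK : Φ 1 ≤ Ψ 1 := by
      refine le_of_tendsto_of_tendsto
        ((hΦc.tendsto 1).mono_left (nhdsWithin_le_nhds (s := Ioo (0:ℝ) 1)))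
        ((hΨc.tendsto 1).mono_left (nhdsWithin_le_nhds (s := Ioo (0:ℝ) 1))) ?_
      filter_upwards [self_mem_nhdsWithin] with r hr
      exact key r hr
    have hK' : Complex.abs (6 * c 3 * ((1 - t^2 : ℝ) : ℂ) + 8 * conj (c 1) * (c 2)^2)
        ≤ 2 * ((1 - t^2)^2 - 4*x^2) := by
      have hΦ1 : Φ 1 = Complex.abs (6 * c 3 * ((1 - t^2 : ℝ) : ℂ) + 8 * conj (c 1) * (c 2)^2) := by
        rw [hΦdef]
        norm_num
        congr 1
        ring
      have hΨ1 : Ψ 1 = 2 * ((1 - t^2)^2 - 4*x^2) := by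
        rw [hΨdef]
        norm_num
        ring
      rw [← hΦ1, ← hΨ1]
      exact hK
    -- triangle inequalities
    have hD : (0:ℝ) < 1 - t^2 := by nlinarith [hlt, htpos]
    set y := Complex.abs (c 3) with hydef
    have htri2 : 6*y*(1-t^2) ≤ Complex.abs (6 * c 3 * ((1 - t^2 : ℝ) : ℂ) + 8 * conj (c 1) * (c 2)^2)
        + 8*t*x^2 := by
      have hA : Complex.abs (6 * c 3 * ((1 - t^2 : ℝ) : ℂ)) = 6*y*(1-t^2) := by
        rw [map_mul, map_mul, Complex.abs_ofReal, _root_.abs_of_pos hD]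
        norm_num
        exact Or.inl rfl
      have hB : Complex.abs (8 * conj (c 1) * (c 2)^2) = 8*t*x^2 := by
        rw [map_mul, map_mul, map_pow, Complex.abs_conj]
        norm_num
        rfl
      calc 6*y*(1-t^2) = Complex.abs (6 * c 3 * ((1 - t^2 : ℝ) : ℂ)) := hA.symm
        _ ≤ Complex.abs (6 * c 3 * ((1 - t^2 : ℝ) : ℂ) + 8 * conj (c 1) * (c 2)^2)
              + Complex.abs (8 * conj (c 1) * (c 2)^2) :=
            cabs_le_add _ _
        _ = _ := by rw [hB]
    have h6y : 6*y*(1-t^2) ≤ 2*(1-t^2)^2 - 8*x^2 + 8*t*x^2 := by linarith [htri2, hK']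
    -- final polynomial inequality
    have hQ : 0 ≤ (1-t^2)*((2+3*m)*t-2) - 4*(1-t)*x := by
      nlinarith [mul_nonneg (sub_nonneg.2 hSP) (by linarith : (0:ℝ) ≤ 1-t), h1', hD.le, htpos]
    have hP : 0 ≤ (2+3*m)*t*(1-t^2)^2 - (2*(1-t^2)^2 - 8*x^2*(1-t)) - 6*m*t*x*(1-t^2) := by
      nlinarith [mul_nonneg (sub_nonneg.2 hSP) hQ]
    have htri1 : Complex.abs (c 3 - μ * c 1 * c 2) ≤ y + m*t*x := by
      calc Complex.abs (c 3 - μ * c 1 * c 2) ≤ y + Complex.abs (μ * c 1 * c 2) :=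
            cabs_sub_le _ _
        _ = y + m*t*x := by rw [map_mul, map_mul]
    have hfin : y + m*t*x ≤ (1/3 + 1/2*m)*t*(1-t^2) := by
      have hmul : 6*(1-t^2)*(y + m*t*x) ≤ 6*(1-t^2)*((1/3 + 1/2*m)*t*(1-t^2)) := by
        nlinarith [h6y, hP]
      exact le_of_mul_le_mul_left hmul (by linarith : (0:ℝ) < 6*(1-t^2))
    linarith [htri1, hfin]
end

section
/- Let ω ∈ 𝓑'₀ have power series expansion ω(z) = c₁z + c₂z² + c₃z³ + ⋯ on 𝔻. Then |c₁c₃ − c₂²| ≤ (1/12)·(1 − |c₁|²)·(3 + |c₁|²). -/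
open Complex Metric Set ComplexConjugate FormalMultilinearSeries

/-- Strict maximum modulus dichotomy: a bounded-by-one holomorphic map on the unit ball whose
value at the center has modulus `< 1` maps into the open unit ball. -/
lemma mapsTo_ball_of_abs_lt (f : ℂ → ℂ) (hf : DifferentiableOn ℂ f (ball 0 1))
    (hle : ∀ z ∈ ball (0:ℂ) 1, ‖f z‖ ≤ 1) (h0 : ‖f 0‖ < 1) :
    Set.MapsTo f (ball 0 1) (ball (0:ℂ) 1) := by
  intro z hz
  simp only [mem_ball, dist_zero_right]
  by_contra hc
  push_neg at hc
  have h1 : ‖f z‖ = 1 := le_antisymm (hle z hz) hc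
  have hmax : IsMaxOn (norm ∘ f) (ball 0 1) z := by
    intro w hw
    simp only [Function.comp_apply, h1]
    exact hle w hw
  have := Complex.eqOn_of_isPreconnected_of_isMaxOn_norm
    (convex_ball (0:ℂ) 1).isPreconnected isOpen_ball hf hz hmax
  have h2 : f 0 = f z := this (mem_ball_self one_pos)
  rw [h2, h1] at h0
  exact lt_irrefl _ h0

/-- A bounded-by-one holomorphic map attaining modulus one at the center is constant. -/
lemma eqOn_const_of_abs_eq_one (f : ℂ → ℂ) (hf : DifferentiableOn ℂ f (ball 0 1))
    (hle : ∀ z ∈ ball (0:ℂ) 1, ‖f z‖ ≤ 1) (h0 : ‖f 0‖ = 1) :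
    Set.EqOn f (fun _ => f 0) (ball 0 1) := by
  have hmax : IsMaxOn (norm ∘ f) (ball 0 1) 0 := by
    intro w hw
    simp only [Function.comp_apply, h0]
    exact hle w hw
  exact Complex.eqOn_of_isPreconnected_of_isMaxOn_norm
    (convex_ball (0:ℂ) 1).isPreconnected isOpen_ball hf (mem_ball_self one_pos) hmax

lemma key_moebius_bound (a u : ℂ) (ha : ‖a‖ ≤ 1) (hu : ‖u‖ ≤ 1) :
    ‖u - a‖ ≤ ‖1 - conj a * u‖ := by
  have ha' : Complex.normSq a ≤ 1 := by
    rw [← Complex.sq_norm]; nlinarith [norm_nonneg a]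
  have hu' : Complex.normSq u ≤ 1 := by
    rw [← Complex.sq_norm]; nlinarith [norm_nonneg u]
  rw [Complex.norm_def, Complex.norm_def]
  apply Real.sqrt_le_sqrt
  simp only [Complex.normSq_apply, Complex.sub_re, Complex.sub_im, Complex.mul_re, Complex.mul_im,
    Complex.one_re, Complex.one_im, Complex.conj_re, Complex.conj_im] at *
  nlinarith [mul_nonneg (sub_nonneg.2 ha') (sub_nonneg.2 hu')]

lemma moeb_ne (f : ℂ → ℂ) (hle : ∀ z ∈ ball (0:ℂ) 1, ‖f z‖ ≤ 1)
    (h0 : ‖f 0‖ < 1) : ∀ z ∈ ball (0:ℂ) 1, 1 - conj (f 0) * f z ≠ 0 := by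
  intro z hz hzero
  have h1 : conj (f 0) * f z = 1 := by linear_combination -hzero
  have := congrArg norm h1
  rw [norm_mul, norm_one, Complex.norm_conj] at this
  nlinarith [hle z hz, norm_nonneg (f 0), norm_nonneg (f z)]

lemma moeb_facts (f : ℂ → ℂ) (hf : DifferentiableOn ℂ f (ball 0 1))
    (hle : ∀ z ∈ ball (0:ℂ) 1, ‖f z‖ ≤ 1) (h0 : ‖f 0‖ < 1) :
    DifferentiableOn ℂ (fun z => (f z - f 0) * (1 - conj (f 0) * f z)⁻¹) (ball 0 1) ∧
    Set.MapsTo (fun z => (f z - f 0) * (1 - conj (f 0) * f z)⁻¹) (ball 0 1) (ball (0:ℂ) 1) ∧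
    deriv (fun z => (f z - f 0) * (1 - conj (f 0) * f z)⁻¹) 0
      = deriv f 0 * ((1 - ‖f 0‖^2 : ℝ):ℂ)⁻¹ := by
  set a := f 0 with ha
  have hne := moeb_ne f hle h0
  set h : ℂ → ℂ := fun z => (f z - a) * (1 - conj a * f z)⁻¹ with hh
  have hdiff : DifferentiableOn ℂ h (ball 0 1) := by
    apply (hf.sub (differentiableOn_const a)).mul
    exact ((differentiableOn_const 1).sub ((differentiableOn_const (conj a)).mul hf)).inv hne
  have hb : ∀ z ∈ ball (0:ℂ) 1, ‖h z‖ ≤ 1 := by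
    intro z hz
    have hpos : (0:ℝ) < ‖1 - conj a * f z‖ :=
      norm_pos_iff.mpr (hne z hz)
    rw [hh]
    simp only [norm_mul, norm_inv]
    rw [mul_inv_le_iff₀ hpos, one_mul]
    exact key_moebius_bound a (f z) h0.le (hle z hz)
  have h00 : h 0 = 0 := by simp [hh, ha]
  have hmaps : Set.MapsTo h (ball 0 1) (ball (0:ℂ) 1) := by
    apply mapsTo_ball_of_abs_lt h hdiff hb
    rw [h00]; simp
  have hfd : HasDerivAt f (deriv f 0) 0 :=
    (hf.differentiableAt (isOpen_ball.mem_nhds (mem_ball_self one_pos))).hasDerivAt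
  have hud : HasDerivAt (fun z => 1 - conj a * f z) (-(conj a * deriv f 0)) 0 :=
    (hfd.const_mul (conj a)).const_sub 1
  have hinv := hud.inv (hne 0 (mem_ball_self one_pos))
  have hder : HasDerivAt h
      (deriv f 0 * (1 - conj a * f 0)⁻¹ +
        (f 0 - a) * (-(-(conj a * deriv f 0)) / (1 - conj a * f 0) ^ 2)) 0 :=
    (hfd.sub_const a).mul hinv
  have hval : deriv h 0 = deriv f 0 * ((1 - ‖a‖^2 : ℝ):ℂ)⁻¹ := by
    rw [hder.deriv, ← ha, sub_self, zero_mul, add_zero]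
    congr 2
    rw [← Complex.normSq_eq_norm_sq]
    push_cast
    rw [← Complex.mul_conj]
    ring
  exact ⟨hdiff, hmaps, hval⟩

/-- Schwarz–Pick inequality for the first coefficient. -/
lemma schurA (f : ℂ → ℂ) (hf : DifferentiableOn ℂ f (ball 0 1))
    (hle : ∀ z ∈ ball (0:ℂ) 1, ‖f z‖ ≤ 1) :
    ‖deriv f 0‖ ≤ 1 - ‖f 0‖^2 := by
  have hf0 : ‖f 0‖ ≤ 1 := hle 0 (mem_ball_self one_pos)
  rcases lt_or_eq_of_le hf0 with h0 | h0
  · obtain ⟨hdiff, hmaps, hval⟩ := moeb_facts f hf hle h0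
    set h : ℂ → ℂ := fun z => (f z - f 0) * (1 - conj (f 0) * f z)⁻¹ with hh
    have h00 : h 0 = 0 := by simp [hh]
    have hd1 : ‖dslope h 0 0‖ ≤ 1 / 1 := by
      apply Complex.norm_dslope_le_div_of_mapsTo_ball hdiff
      · rw [show h 0 = (0:ℂ) from h00]; exact hmaps.mono_right ball_subset_closedBall
      · exact mem_ball_self one_pos
    rw [dslope_same, hval, norm_mul, norm_inv] at hd1
    have hD : (0:ℝ) < 1 - ‖f 0‖^2 := by nlinarith [norm_nonneg (f 0)]
    rw [Complex.norm_real, Real.norm_eq_abs, _root_.abs_of_nonneg hD.le] at hd1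
    rw [mul_inv_le_iff₀ hD] at hd1
    · linarith
  · have hconst : Set.EqOn f (fun _ => f 0) (ball 0 1) :=
      eqOn_const_of_abs_eq_one f hf hle h0
    have : deriv f 0 = 0 := by
      have : f =ᶠ[nhds (0:ℂ)] (fun _ => f 0) :=
        Filter.eventuallyEq_of_mem (isOpen_ball.mem_nhds (mem_ball_self one_pos)) hconst
      rw [this.deriv_eq, deriv_const]
    rw [this, norm_zero, h0]
    norm_num

lemma coeff_eq_iteratedDeriv {f : ℂ → ℂ} {p : FormalMultilinearSeries ℂ ℂ ℂ}
    (hp : HasFPowerSeriesAt f p 0) (n : ℕ) :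
    (Nat.factorial n : ℂ) * p.coeff n = iteratedDeriv n f 0 := by
  obtain ⟨r, hr⟩ := hp
  have := hr.factorial_smul (y := (1:ℂ)) n
  rw [iteratedDeriv_eq_iteratedFDeriv, ← this, nsmul_eq_mul]
  rfl

/-- The second Schur coefficient inequality. -/
lemma schurS (g : ℂ → ℂ) (hg : DifferentiableOn ℂ g (ball 0 1))
    (hle : ∀ z ∈ ball (0:ℂ) 1, ‖g z‖ ≤ 1) (h0 : ‖g 0‖ < 1) :
    ‖(deriv (deriv g) 0 / 2) * ((1 - ‖g 0‖^2 : ℝ):ℂ)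
        + conj (g 0) * (deriv g 0)^2‖
      ≤ (1 - ‖g 0‖^2)^2 - ‖deriv g 0‖^2 := by
  obtain ⟨hdiff, hmaps, hval⟩ := moeb_facts g hg hle h0
  have hne := moeb_ne g hle h0
  set a := g 0 with ha
  set h : ℂ → ℂ := fun z => (g z - a) * (1 - conj a * g z)⁻¹ with hh
  set D : ℝ := 1 - ‖a‖ ^ 2 with hD
  have hDpos : 0 < D := by nlinarith [norm_nonneg a]
  have h0mem : (0:ℂ) ∈ ball (0:ℂ) 1 := mem_ball_self one_pos
  have h00 : h 0 = 0 := by simp [hh, ha]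
  have hu0 : 1 - conj a * a = ((D:ℝ):ℂ) := by
    rw [hD, ← Complex.normSq_eq_norm_sq]
    push_cast
    rw [← Complex.mul_conj]
    ring
  have hg'diff : DifferentiableOn ℂ (deriv g) (ball 0 1) :=
    ((hg.analyticOnNhd isOpen_ball).deriv).differentiableOn
  set F : ℂ → ℂ := fun z => deriv g z * (1 - conj a * g z)⁻¹
      + (g z - a) * (conj a * deriv g z * ((1 - conj a * g z) ^ 2)⁻¹) with hF
  have eqF : ∀ z ∈ ball (0:ℂ) 1, deriv h z = F z := by
    intro z hz
    have hgz : HasDerivAt g (deriv g z) z :=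
      (hg.differentiableAt (isOpen_ball.mem_nhds hz)).hasDerivAt
    have hud : HasDerivAt (fun w => 1 - conj a * g w) (-(conj a * deriv g z)) z :=
      (hgz.const_mul (conj a)).const_sub 1
    have hder := (hgz.sub_const a).mul (hud.inv (hne z hz))
    simp only [Pi.inv_apply] at hder
    rw [show deriv g z * (1 - conj a * g z)⁻¹ +
        (g z - a) * (-(-(conj a * deriv g z)) / (1 - conj a * g z) ^ 2) = F z by
      rw [hF]; field_simp] at hder
    exact hder.deriv
  have hdd : deriv (deriv h) 0
      = deriv (deriv g) 0 * ((D:ℝ):ℂ)⁻¹ + 2 * conj a * (deriv g 0)^2 * (((D:ℝ):ℂ)^2)⁻¹ := by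
    have hev : deriv h =ᶠ[nhds (0:ℂ)] F :=
      Filter.eventuallyEq_of_mem (isOpen_ball.mem_nhds h0mem) eqF
    rw [hev.deriv_eq]
    have hg0 : HasDerivAt g (deriv g 0) 0 :=
      (hg.differentiableAt (isOpen_ball.mem_nhds h0mem)).hasDerivAt
    have hg'0 : HasDerivAt (deriv g) (deriv (deriv g) 0) 0 :=
      (hg'diff.differentiableAt (isOpen_ball.mem_nhds h0mem)).hasDerivAt
    have hud : HasDerivAt (fun w => 1 - conj a * g w) (-(conj a * deriv g 0)) 0 :=
      (hg0.const_mul (conj a)).const_sub 1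
    have hune : (1 - conj a * g 0) ≠ 0 := hne 0 h0mem
    have huinv := hud.inv hune
    have term1 := hg'0.mul huinv
    have hpow := hud.pow 2
    have hpowinv := hpow.inv (pow_ne_zero 2 hune)
    have hw := (hg'0.const_mul (conj a)).mul hpowinv
    have term2 := (hg0.sub_const a).mul hw
    have total := (term1.add term2).deriv
    simp only [Pi.inv_apply, Pi.pow_apply, Pi.mul_apply] at total
    rw [show deriv F 0 = _ from total]
    rw [← ha, sub_self, zero_mul, add_zero, hu0]
    field_simp
    ring
  obtain ⟨p, hp⟩ : AnalyticAt ℂ h 0 := (hdiff.analyticOnNhd isOpen_ball) 0 h0mem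
  have hp1 : HasFPowerSeriesAt (dslope h 0) p.fslope 0 :=
    hp.has_fpower_series_dslope_fslope
  have hc2' := coeff_eq_iteratedDeriv hp 2
  have hc2 : p.coeff 2 = deriv (deriv h) 0 / 2 := by
    rw [show (2:ℕ) = 1 + 1 from rfl, iteratedDeriv_succ, iteratedDeriv_one] at hc2'
    norm_num [Nat.factorial] at hc2'
    rw [← hc2']
    ring
  have hmaps0 : Set.MapsTo h (ball 0 1) (ball (h 0) 1) := by rw [h00]; exact hmaps
  have hg1diff : DifferentiableOn ℂ (dslope h 0) (ball 0 1) :=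
    (differentiableOn_dslope (isOpen_ball.mem_nhds h0mem)).2 hdiff
  have hg1le : ∀ z ∈ ball (0:ℂ) 1, ‖dslope h 0 z‖ ≤ 1 := by
    intro z hz
    have := Complex.norm_dslope_le_div_of_mapsTo_ball hdiff (hmaps0.mono_right ball_subset_closedBall) hz
    rwa [div_one] at this
  have hA := schurA (dslope h 0) hg1diff hg1le
  rw [dslope_same] at hA
  have hd1 : deriv (dslope h 0) 0 = p.coeff 2 := by
    rw [hp1.deriv]
    exact coeff_fslope
  rw [hd1, hc2, hdd, hval] at hA
  have habs1 : ‖deriv g 0 * ((D:ℝ):ℂ)⁻¹‖ = ‖deriv g 0‖ / D := by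
    rw [norm_mul, norm_inv, Complex.norm_real, Real.norm_eq_abs, _root_.abs_of_nonneg hDpos.le, div_eq_mul_inv]
  have habs2 : ‖(deriv (deriv g) 0 * ((D:ℝ):ℂ)⁻¹
        + 2 * conj a * (deriv g 0)^2 * (((D:ℝ):ℂ)^2)⁻¹) / 2‖
      = ‖(deriv (deriv g) 0 / 2) * ((D:ℝ):ℂ) + conj a * (deriv g 0)^2‖ / D^2 := by
    rw [show (deriv (deriv g) 0 * ((D:ℝ):ℂ)⁻¹
        + 2 * conj a * (deriv g 0)^2 * (((D:ℝ):ℂ)^2)⁻¹) / 2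
        = ((deriv (deriv g) 0 / 2) * ((D:ℝ):ℂ) + conj a * (deriv g 0)^2) * (((D:ℝ):ℂ)^2)⁻¹ by
      have : ((D:ℝ):ℂ) ≠ 0 := by
        simpa using hDpos.ne'
      field_simp]
    rw [norm_mul, norm_inv, norm_pow, Complex.norm_real, Real.norm_eq_abs, _root_.abs_of_nonneg hDpos.le]
    ring
  rw [habs1, habs2] at hA
  have hDD : (0:ℝ) < D^2 := by positivity
  rw [div_le_iff₀ hDD] at hA
  calc ‖(deriv (deriv g) 0 / 2) * ((D:ℝ):ℂ) + conj a * (deriv g 0)^2‖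
      ≤ (1 - (‖deriv g 0‖ / D)^2) * D^2 := hA
    _ = D^2 - ‖deriv g 0‖^2 := by field_simp

lemma ofScalars_coeff' (a : ℕ → ℂ) (n : ℕ) : (ofScalars ℂ a).coeff n = a n := by
  show a n • (ContinuousMultilinearMap.mkPiAlgebraFin ℂ n ℂ) (fun _ => 1) = a n
  simp

lemma hasFPS (ω : ℂ → ℂ) (c : ℕ → ℂ)
    (hc : ∀ z ∈ ball (0:ℂ) 1, HasSum (fun n : ℕ => c (n + 1) * z ^ (n + 1)) (ω z)) :
    HasFPowerSeriesAt ω (ofScalars ℂ (fun n => if n = 0 then 0 else c n)) 0 := by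
  rw [hasFPowerSeriesAt_iff]
  have hmem : ball (0:ℂ) 1 ∈ nhds (0:ℂ) := isOpen_ball.mem_nhds (mem_ball_self one_pos)
  filter_upwards [hmem] with z hz
  have h2 : HasSum (fun n : ℕ => (fun m : ℕ => (if m = 0 then 0 else c m) * z ^ m) (n + 1))
      (ω z) := by simpa using hc z hz
  have h3 := (hasSum_nat_add_iff
      (f := fun m : ℕ => (if m = 0 then 0 else c m) * z ^ m) 1).1 h2
  norm_num at h3
  have h4 : (fun n : ℕ => z ^ n • (ofScalars ℂ (fun n => if n = 0 then 0 else c n)).coeff n)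
      = fun n : ℕ => (if n = 0 then 0 else c n) * z ^ n := by
    funext n
    rw [ofScalars_coeff', smul_eq_mul, mul_comm]
  rw [h4, zero_add]
  convert h3 using 2 with n
  split <;> simp_all

theorem stmt_12 (ω : ℂ → ℂ) (c : ℕ → ℂ)
    (hd : DifferentiableOn ℂ ω (ball 0 1))
    (h0 : ω 0 = 0)
    (hb : ∀ z ∈ ball (0:ℂ) 1, ‖deriv ω z‖ ≤ 1)
    (hc : ∀ z ∈ ball (0:ℂ) 1, HasSum (fun n : ℕ => c (n + 1) * z ^ (n + 1)) (ω z)) :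
    ‖c 1 * c 3 - c 2^2‖ ≤ (1/12) * (1 - ‖c 1‖^2) * (3 + ‖c 1‖^2) := by
  have hq := hasFPS ω c hc
  have hder1 : deriv ω 0 = c 1 := by
    have h := coeff_eq_iteratedDeriv hq 1
    rw [ofScalars_coeff'] at h
    norm_num [Nat.factorial] at h
    exact h.symm
  have hder2 : deriv (deriv ω) 0 = 2 * c 2 := by
    have h := coeff_eq_iteratedDeriv hq 2
    rw [ofScalars_coeff'] at h
    rw [show iteratedDeriv 2 ω = deriv (deriv ω) from by
      rw [show (2:ℕ) = 1 + 1 from rfl, iteratedDeriv_succ, iteratedDeriv_one]] at h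
    norm_num [Nat.factorial] at h
    exact h.symm
  have hder3 : deriv (deriv (deriv ω)) 0 = 6 * c 3 := by
    have h := coeff_eq_iteratedDeriv hq 3
    rw [ofScalars_coeff'] at h
    rw [show iteratedDeriv 3 ω = deriv (deriv (deriv ω)) from by
      rw [show (3:ℕ) = 1 + 1 + 1 from rfl, iteratedDeriv_succ, iteratedDeriv_succ,
        iteratedDeriv_one]] at h
    norm_num [Nat.factorial] at h
    exact h.symm
  have hg'diff : DifferentiableOn ℂ (deriv ω) (ball 0 1) :=
    ((hd.analyticOnNhd isOpen_ball).deriv).differentiableOn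
  have hcle : ‖c 1‖ ≤ 1 := by
    rw [← hder1]; exact hb 0 (mem_ball_self one_pos)
  set r : ℝ := ‖c 1‖ with hr
  have hr0 : 0 ≤ r := norm_nonneg _
  rcases lt_or_eq_of_le hcle with h1 | h1
  · -- |c 1| < 1
    have hS := schurS (deriv ω) hg'diff hb (by rwa [hder1])
    rw [hder3, hder2, hder1] at hS
    set s : ℝ := ‖c 2‖ with hs
    have hs0 : 0 ≤ s := norm_nonneg _
    set T : ℂ := (6 * c 3 / 2) * ((1 - r^2 : ℝ):ℂ) + conj (c 1) * (2 * c 2)^2 with hT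
    have hcc : c 1 * conj (c 1) = ((r:ℝ):ℂ)^2 := by
      rw [Complex.mul_conj, Complex.normSq_eq_norm_sq, hr]
      push_cast
      ring
    have hid : ((3*(1 - r^2) : ℝ):ℂ) * (c 1 * c 3 - c 2^2)
        = c 1 * T - ((3 + r^2 : ℝ):ℂ) * c 2^2 := by
      rw [hT]
      push_cast
      linear_combination (-4 * c 2^2) * hcc
    have hTabs : ‖T‖ ≤ (1 - r^2)^2 - (2*s)^2 := by
      have h2s : ‖2 * c 2‖ = 2 * s := by
        rw [norm_mul, Complex.norm_two]
      calc ‖T‖ ≤ (1 - r^2)^2 - ‖2 * c 2‖^2 := hS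
        _ = (1 - r^2)^2 - (2*s)^2 := by rw [h2s]
    have habsid := congrArg norm hid
    rw [norm_mul, Complex.norm_real, Real.norm_eq_abs] at habsid
    have hD2 : (0:ℝ) < 1 - r^2 := by nlinarith
    rw [_root_.abs_of_nonneg (by nlinarith : (0:ℝ) ≤ 3*(1-r^2))] at habsid
    have htri : ‖c 1 * T - ((3 + r^2 : ℝ):ℂ) * c 2^2‖
        ≤ r * ‖T‖ + (3 + r^2) * s^2 := by
      calc ‖c 1 * T - ((3 + r^2 : ℝ):ℂ) * c 2^2‖
          ≤ ‖c 1 * T‖ + ‖((3 + r^2 : ℝ):ℂ) * c 2^2‖ :=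
            norm_sub_le _ _
        _ = r * ‖T‖ + (3 + r^2) * s^2 := by
            rw [norm_mul, norm_mul, norm_pow, Complex.norm_real, Real.norm_eq_abs,
              _root_.abs_of_nonneg (by nlinarith : (0:ℝ) ≤ 3 + r^2), ← hr, ← hs]
    have hmain : 3*(1-r^2) * ‖c 1 * c 3 - c 2^2‖
        ≤ r * ((1 - r^2)^2 - (2*s)^2) + (3 + r^2) * s^2 := by
      rw [habsid]
      have := norm_nonneg T
      nlinarith [htri]
    have hs4 : (2*s)^2 ≤ (1 - r^2)^2 := by
      nlinarith [norm_nonneg T, hTabs]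
    have hkey : 0 ≤ ((1-r^2)^2 - (2*s)^2) * ((1-r)*(3-r)) :=
      mul_nonneg (by linarith) (mul_nonneg (by linarith) (by linarith))
    have hA0 : 0 ≤ ‖c 1 * c 3 - c 2^2‖ := norm_nonneg _
    have h12 : 12 * (1-r^2) * ‖c 1 * c 3 - c 2^2‖ ≤ (1-r^2)^2 * (3+r^2) := by
      nlinarith [hmain, hkey]
    nlinarith [h12, hD2, hA0, mul_pos hD2 hD2]
  · -- |c 1| = 1
    have hconst := eqOn_const_of_abs_eq_one (deriv ω) hg'diff hb (by rwa [hder1])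
    have hz : ∀ z ∈ ball (0:ℂ) 1, deriv (deriv ω) z = 0 := by
      intro z hz
      have hev : deriv ω =ᶠ[nhds z] (fun _ => deriv ω 0) :=
        Filter.eventuallyEq_of_mem (isOpen_ball.mem_nhds hz) hconst
      rw [hev.deriv_eq, deriv_const]
    have hc2 : c 2 = 0 := by
      have h := hz 0 (mem_ball_self one_pos)
      rw [hder2] at h
      exact (mul_eq_zero.1 h).resolve_left two_ne_zero
    have hc3 : c 3 = 0 := by
      have hev2 : deriv (deriv ω) =ᶠ[nhds (0:ℂ)] (fun _ => 0) :=
        Filter.eventuallyEq_of_mem (isOpen_ball.mem_nhds (mem_ball_self one_pos)) hz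
      have h := hev2.deriv_eq
      rw [deriv_const, hder3] at h
      have h6 : (6:ℂ) ≠ 0 := by norm_num
      exact (mul_eq_zero.1 h).resolve_left h6
    rw [hc2, hc3, h1]
    simp
end
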